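/- arXiv:2211.08955 — 9 statements merged into one kernel-verified Lean document; each statement's English description precedes it below -/
import Mathlib

section
/- Let m ≥ 1 and n ∈ ℕ. There exists a nonzero bihomogeneous A ∈ S of bidegree (m,n) with δ(A) = 0 if and only if n ≥ m. -/
open MvPolynomial

noncomputable section

/-- The polynomial ring `ℂ[Y₀,…,Y_N,X₀,…,X_N]`: the left copy of `Fin (N+1)` indexes the
`Y`-variables, the right copy indexes the `X`-variables. -/
abbrev S (N : ℕ) : Type := MvPolynomial (Fin (N + 1) ⊕ Fin (N + 1)) ℂ

/-- Weight giving `1` to each `Yᵢ` and `0` to each `Xᵢ`. -/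
def wY (N : ℕ) : (Fin (N + 1) ⊕ Fin (N + 1)) → ℕ := Sum.elim (fun _ => 1) (fun _ => 0)

/-- Weight giving `0` to each `Yᵢ` and `1` to each `Xᵢ`. -/
def wX (N : ℕ) : (Fin (N + 1) ⊕ Fin (N + 1)) → ℕ := Sum.elim (fun _ => 0) (fun _ => 1)

/-- `A` is bihomogeneous of bidegree `(m, n)`. -/
def Bihom (N m n : ℕ) (A : S N) : Prop :=
  A.IsWeightedHomogeneous (wY N) m ∧ A.IsWeightedHomogeneous (wX N) n

/-- The operator `δ(A) = ∑ᵢ Xᵢ · ∂A/∂Yᵢ`. -/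
def deltaOp (N : ℕ) (A : S N) : S N :=
  ∑ i : Fin (N + 1), X (Sum.inr i) * pderiv (Sum.inl i) A

/-- The quadratic polynomial `q = ∑ᵢ Xᵢ·Yᵢ`. -/
def qPoly (N : ℕ) : S N := ∑ i : Fin (N + 1), X (Sum.inr i) * X (Sum.inl i)

namespace Statement3Aux

variable {N : ℕ}

/-- The raising operator `ε(A) = ∑ᵢ Yᵢ · ∂A/∂Xᵢ`. -/
def epsOp (N : ℕ) (A : S N) : S N :=
  ∑ i : Fin (N + 1), X (Sum.inl i) * pderiv (Sum.inr i) A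

lemma deltaOp_zero : deltaOp N (0 : S N) = 0 := by simp [deltaOp]

lemma epsOp_zero : epsOp N (0 : S N) = 0 := by simp [epsOp]

lemma epsOp_smul (c : ℂ) (A : S N) : epsOp N (c • A) = c • epsOp N A := by
  simp [epsOp, Finset.smul_sum, mul_smul_comm]

lemma deltaOp_sub (A B : S N) : deltaOp N (A - B) = deltaOp N A - deltaOp N B := by
  simp [deltaOp, map_sub, mul_sub, Finset.sum_sub_distrib]

lemma deltaOp_mul (A B : S N) :
    deltaOp N (A * B) = deltaOp N A * B + A * deltaOp N B := by
  simp only [deltaOp, pderiv_mul, mul_add, Finset.sum_add_distrib, Finset.sum_mul,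
    Finset.mul_sum]
  congr 1 <;> (apply Finset.sum_congr rfl; intros; ring)

lemma deltaOp_one : deltaOp N (1 : S N) = 0 := by simp [deltaOp]

lemma weight_single {σ : Type*} (w : σ → ℕ) (v : σ) :
    Finsupp.weight w (Finsupp.single v 1) = w v := by
  simp [Finsupp.weight_apply, Finsupp.sum_single_index]

lemma single_add_sub {σ : Type*} [DecidableEq σ] (d : σ →₀ ℕ) (v : σ) (h : 1 ≤ d v) :
    Finsupp.single v 1 + (d - Finsupp.single v 1) = d := by
  ext a
  rcases eq_or_ne a v with rfl | hav
  · simp only [Finsupp.add_apply, Finsupp.single_eq_same, Finsupp.tsub_apply]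
    omega
  · simp [Finsupp.single_eq_of_ne' (Ne.symm hav)]

/-- Weighted Euler identity. -/
lemma euler {σ : Type*} [Fintype σ] [DecidableEq σ] (w : σ → ℕ) (n : ℕ)
    (A : MvPolynomial σ ℂ) (h : A.IsWeightedHomogeneous w n) :
    ∑ v : σ, (w v : ℂ) • (X v * pderiv v A) = (n : ℂ) • A := by
  conv_lhs => rw [A.as_sum]
  conv_rhs => rw [A.as_sum]
  rw [Finset.smul_sum]
  simp only [map_sum, Finset.mul_sum, Finset.smul_sum]
  rw [Finset.sum_comm]
  refine Finset.sum_congr rfl fun d hd => ?_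
  have hwd : Finsupp.weight w d = n := h (mem_support_iff.mp hd)
  have hterm : ∀ v : σ, (w v : ℂ) • (X v * pderiv v (monomial d (coeff d A)))
      = ((w v * d v : ℕ) : ℂ) • monomial d (coeff d A) := by
    intro v
    rw [pderiv_monomial]
    rcases Nat.eq_zero_or_pos (d v) with h0 | h0
    · simp [h0]
    · rw [X, monomial_mul, one_mul, single_add_sub d v h0, smul_monomial, smul_monomial]
      congr 1
      simp only [smul_eq_mul]
      push_cast
      ring
  simp only [hterm]
  rw [← Finset.sum_smul]
  congr 1
  rw [← Nat.cast_sum]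
  congr 1
  rw [← hwd, Finsupp.weight_apply, Finsupp.sum_fintype _ _ (by intro i; simp)]
  exact Finset.sum_congr rfl fun v _ => by simp [mul_comm]

lemma pderiv_homog {σ : Type*} [DecidableEq σ] {w : σ → ℕ} {n : ℕ} {A : MvPolynomial σ ℂ}
    (h : A.IsWeightedHomogeneous w n) (v : σ) :
    (pderiv v A).IsWeightedHomogeneous w (n - w v) := by
  conv => rw [A.as_sum]
  rw [map_sum]
  apply IsWeightedHomogeneous.sum
  intro d hd
  rw [pderiv_monomial]
  rcases Nat.eq_zero_or_pos (d v) with h0 | h0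
  · simp only [h0, Nat.cast_zero, mul_zero, map_zero]
    exact isWeightedHomogeneous_zero ℂ w _
  · apply isWeightedHomogeneous_monomial
    have h1 : Finsupp.weight w d = n := h (mem_support_iff.mp hd)
    have h2 := congrArg (Finsupp.weight w) (single_add_sub d v h0)
    rw [map_add, weight_single, h1] at h2
    omega

lemma pderiv_eq_zero_homog0 {σ : Type*} [DecidableEq σ] {w : σ → ℕ} {A : MvPolynomial σ ℂ}
    (h : A.IsWeightedHomogeneous w 0) (v : σ) (hv : w v ≠ 0) : pderiv v A = 0 := by
  conv => rw [A.as_sum]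
  rw [map_sum]
  apply Finset.sum_eq_zero
  intro d hd
  have h1 : Finsupp.weight w d = 0 := h (mem_support_iff.mp hd)
  have h2 : d v = 0 := by have := Finsupp.le_weight w hv d; omega
  simp [pderiv_monomial, h2]

lemma pderiv_comm {σ : Type*} [DecidableEq σ] (i j : σ) (A : MvPolynomial σ ℂ) :
    pderiv i (pderiv j A) = pderiv j (pderiv i A) := by
  induction A using MvPolynomial.induction_on with
  | C a => simp
  | add p q hp hq => simp [map_add, hp, hq]
  | mul_X p s hp =>
    rcases eq_or_ne s i with rfl | hsi
    · rcases eq_or_ne s j with rfl | hsj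
      · simp [pderiv_mul, hp]
      · simp [pderiv_mul, hp, pderiv_X_of_ne hsj]
        ring
    · rcases eq_or_ne s j with rfl | hsj
      · simp [pderiv_mul, hp, pderiv_X_of_ne hsi]
        ring
      · simp [pderiv_mul, hp, pderiv_X_of_ne hsi, pderiv_X_of_ne hsj]

lemma eulerX (A : S N) (q : ℕ) (h : A.IsWeightedHomogeneous (wX N) q) :
    ∑ i : Fin (N + 1), X (Sum.inr i) * pderiv (Sum.inr i) A = (q : ℂ) • A := by
  have h1 := euler (wX N) q A h
  rw [Fintype.sum_sum_type] at h1
  simpa [wX] using h1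

lemma eulerY (A : S N) (p : ℕ) (h : A.IsWeightedHomogeneous (wY N) p) :
    ∑ i : Fin (N + 1), X (Sum.inl i) * pderiv (Sum.inl i) A = (p : ℂ) • A := by
  have h1 := euler (wY N) p A h
  rw [Fintype.sum_sum_type] at h1
  simpa [wY] using h1

lemma comm_rel (A : S N) (p q : ℕ) (hY : A.IsWeightedHomogeneous (wY N) p)
    (hX : A.IsWeightedHomogeneous (wX N) q) :
    deltaOp N (epsOp N A) = epsOp N (deltaOp N A) + ((q : ℂ) - p) • A := by
  have hL : deltaOp N (epsOp N A)
      = (∑ i : Fin (N + 1), X (Sum.inr i) * pderiv (Sum.inr i) A)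
        + ∑ i : Fin (N + 1), ∑ j : Fin (N + 1),
            X (Sum.inr i) * X (Sum.inl j) * pderiv (Sum.inl i) (pderiv (Sum.inr j) A) := by
    unfold deltaOp epsOp
    rw [← Finset.sum_add_distrib]
    refine Finset.sum_congr rfl fun i _ => ?_
    rw [map_sum]
    simp only [pderiv_mul, mul_add, Finset.mul_sum, Finset.sum_add_distrib]
    refine congrArg₂ (· + ·) ?_ ?_
    · rw [Finset.sum_eq_single i]
      · simp
      · intro j _ hji
        rw [pderiv_X_of_ne (by simpa using hji)]
        simp
      · simp
    · exact Finset.sum_congr rfl fun j _ => by ring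
  have hR : epsOp N (deltaOp N A)
      = (∑ j : Fin (N + 1), X (Sum.inl j) * pderiv (Sum.inl j) A)
        + ∑ j : Fin (N + 1), ∑ i : Fin (N + 1),
            X (Sum.inl j) * X (Sum.inr i) * pderiv (Sum.inr j) (pderiv (Sum.inl i) A) := by
    unfold deltaOp epsOp
    rw [← Finset.sum_add_distrib]
    refine Finset.sum_congr rfl fun j _ => ?_
    rw [map_sum]
    simp only [pderiv_mul, mul_add, Finset.mul_sum, Finset.sum_add_distrib]
    refine congrArg₂ (· + ·) ?_ ?_
    · rw [Finset.sum_eq_single j]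
      · simp
      · intro i _ hij
        rw [pderiv_X_of_ne (by simpa using hij)]
        simp
      · simp
    · exact Finset.sum_congr rfl fun i _ => by ring
  have hT : (∑ i : Fin (N + 1), ∑ j : Fin (N + 1),
        X (Sum.inr i) * X (Sum.inl j) * pderiv (Sum.inl i) (pderiv (Sum.inr j) A))
      = ∑ j : Fin (N + 1), ∑ i : Fin (N + 1),
          X (Sum.inl j) * X (Sum.inr i) * pderiv (Sum.inr j) (pderiv (Sum.inl i) A) := by
    rw [Finset.sum_comm]
    refine Finset.sum_congr rfl fun j _ => Finset.sum_congr rfl fun i _ => ?_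
    rw [pderiv_comm]
    ring
  rw [hL, hR, hT, eulerX A q hX, eulerY A p hY, sub_smul]
  abel

lemma eps_homog {p q : ℕ} {A : S N} (h : Bihom N p q A) :
    Bihom N (p + 1) (q - 1) (epsOp N A) := by
  constructor
  · apply IsWeightedHomogeneous.sum
    intro i _
    have h1 : (pderiv (Sum.inr i) A).IsWeightedHomogeneous (wY N) p := by
      have := pderiv_homog h.1 (Sum.inr i)
      simpa [wY] using this
    have h2 := (isWeightedHomogeneous_X ℂ (wY N) (Sum.inl i)).mul h1
    have h3 : wY N (Sum.inl i) + p = p + 1 := by simp [wY]; omega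
    rwa [h3] at h2
  · apply IsWeightedHomogeneous.sum
    intro i _
    have h1 : (pderiv (Sum.inr i) A).IsWeightedHomogeneous (wX N) (q - 1) := by
      have := pderiv_homog h.2 (Sum.inr i)
      simpa [wX] using this
    have h2 := (isWeightedHomogeneous_X ℂ (wX N) (Sum.inl i)).mul h1
    have h3 : wX N (Sum.inl i) + (q - 1) = q - 1 := by simp [wX]
    rwa [h3] at h2

lemma eps_kills {A : S N} (h : A.IsWeightedHomogeneous (wX N) 0) : epsOp N A = 0 := by
  unfold epsOp
  apply Finset.sum_eq_zero
  intro i _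
  rw [pderiv_eq_zero_homog0 h (Sum.inr i) (by simp [wX]), mul_zero]

lemma IWH_pow {σ : Type*} {w : σ → ℕ} {φ : MvPolynomial σ ℂ} {d : ℕ}
    (h : φ.IsWeightedHomogeneous w d) (k : ℕ) :
    (φ ^ k).IsWeightedHomogeneous w (k * d) := by
  induction k with
  | zero => simpa using isWeightedHomogeneous_one ℂ w
  | succ k ih =>
    rw [pow_succ]
    have := ih.mul h
    rwa [show k * d + d = (k + 1) * d by ring] at this

lemma IWH_sub {σ : Type*} {w : σ → ℕ} {φ ψ : MvPolynomial σ ℂ} {d : ℕ}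
    (h1 : φ.IsWeightedHomogeneous w d) (h2 : ψ.IsWeightedHomogeneous w d) :
    (φ - ψ).IsWeightedHomogeneous w d := by
  rw [← mem_weightedHomogeneousSubmodule ℂ] at h1 h2 ⊢
  exact Submodule.sub_mem _ h1 h2

end Statement3Aux

open Statement3Aux

/-- For `m ≥ 1`, there exists a nonzero bihomogeneous `A` of bidegree `(m, n)`
with `δ(A) = 0` iff `n ≥ m`. -/
theorem statement3 (N : ℕ) (hN : 2 ≤ N) (m n : ℕ) (hm : 1 ≤ m) :
    (∃ A : S N, A ≠ 0 ∧ Bihom N m n A ∧ deltaOp N A = 0) ↔ m ≤ n := by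
  constructor
  · rintro ⟨A, hA0, ⟨hAY, hAX⟩, hdel⟩
    by_contra hmn
    push_neg at hmn
    set g : ℕ → S N := fun k => (epsOp N)^[k] A with hg
    have hg0 : g 0 = A := rfl
    have hgs : ∀ k, g (k + 1) = epsOp N (g k) := fun k =>
      Function.iterate_succ_apply' (epsOp N) k A
    have hbih : ∀ k, k ≤ n → Bihom N (m + k) (n - k) (g k) := by
      intro k
      induction k with
      | zero => intro _; exact ⟨by simpa [hg0] using hAY, by simpa [hg0] using hAX⟩
      | succ k ih =>
        intro hk
        have h1 := eps_homog (ih (Nat.le_of_succ_le hk))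
        rw [hgs]
        have e1 : m + (k + 1) = m + k + 1 := by omega
        have e2 : n - (k + 1) = n - k - 1 := by omega
        rw [e1, e2]
        exact h1
    have htop : g (n + 1) = 0 := by
      rw [hgs]
      exact eps_kills (by simpa using (hbih n le_rfl).2)
    have hzero_top : ∀ j, g (n + 1 + j) = 0 := by
      intro j
      induction j with
      | zero => simpa using htop
      | succ j ih =>
        rw [show n + 1 + (j + 1) = (n + 1 + j) + 1 by ring, hgs, ih, epsOp_zero]
    have key : ∀ k, deltaOp N (g (k + 1)) = (((k : ℂ) + 1) * ((n : ℂ) - m - k)) • g k := by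
      intro k
      induction k with
      | zero =>
        rw [hgs, hg0, comm_rel A m n hAY hAX, hdel, epsOp_zero, zero_add]
        norm_num
      | succ k ih =>
        by_cases hk : k + 1 ≤ n
        · have hb := hbih (k + 1) hk
          rw [hgs (k + 1), comm_rel (g (k + 1)) (m + (k + 1)) (n - (k + 1)) hb.1 hb.2,
            ih, epsOp_smul, ← hgs, ← add_smul]
          congr 1
          have hcast : ((n - (k + 1) : ℕ) : ℂ) = (n : ℂ) - ((k : ℂ) + 1) := by
            rw [Nat.cast_sub hk]
            push_cast
            ring
          rw [hcast]
          push_cast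
          ring
        · have h1 : g (k + 1) = 0 := by
            have h2 := hzero_top (k + 1 - (n + 1))
            rwa [show n + 1 + (k + 1 - (n + 1)) = k + 1 by omega] at h2
          rw [hgs (k + 1), h1, epsOp_zero, deltaOp_zero, smul_zero]
    have final : ∀ k, g k = 0 → A = 0 := by
      intro k
      induction k with
      | zero => exact fun h => h
      | succ k ih =>
        intro h
        have h2 := key k
        rw [h, deltaOp_zero] at h2
        have hscal : (((k : ℂ) + 1) * ((n : ℂ) - m - k)) ≠ 0 := by
          apply mul_ne_zero
          · have hne : ((k + 1 : ℕ) : ℂ) ≠ 0 := Nat.cast_ne_zero.mpr k.succ_ne_zero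
            push_cast at hne
            exact hne
          · have he : ((n : ℂ) - m - k) = (((n : ℤ) - m - k : ℤ) : ℂ) := by push_cast; ring
            rw [he]
            exact_mod_cast (by omega : ((n : ℤ) - m - k) ≠ 0)
        exact ih ((smul_eq_zero.mp h2.symm).resolve_left hscal)
    exact hA0 (final (n + 1) htop)
  · intro hmn
    have h10 : (1 : Fin (N + 1)) ≠ 0 := by
      have hv : ((1 : Fin (N + 1)) : ℕ) = 1 := by
        rw [Fin.val_one', Nat.mod_eq_of_lt (by omega)]
      intro hcon
      rw [hcon] at hv
      simp at hv
    set D : S N := X (Sum.inl 0) * X (Sum.inr 1) - X (Sum.inl 1) * X (Sum.inr 0) with hD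
    refine ⟨D ^ m * X (Sum.inr 0) ^ (n - m), ?_, ⟨?_, ?_⟩, ?_⟩
    · -- nonzero
      intro h0
      set v : (Fin (N + 1) ⊕ Fin (N + 1)) → ℂ :=
        Sum.elim (fun i => if i = 0 then 1 else 0) (fun _ => 1) with hv
      have := congrArg (eval v) h0
      rw [map_mul, map_pow, map_pow, map_zero] at this
      rw [hD, map_sub, map_mul, map_mul] at this
      simp only [eval_X, hv, Sum.elim_inl, Sum.elim_inr, if_pos rfl, if_neg h10] at this
      norm_num at this
    · -- wY homogeneity
      have hDY : D.IsWeightedHomogeneous (wY N) 1 := by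
        rw [hD]
        apply IWH_sub
        · have := (isWeightedHomogeneous_X ℂ (wY N) (Sum.inl 0)).mul
            (isWeightedHomogeneous_X ℂ (wY N) (Sum.inr 1))
          simpa [wY] using this
        · have := (isWeightedHomogeneous_X ℂ (wY N) (Sum.inl 1)).mul
            (isWeightedHomogeneous_X ℂ (wY N) (Sum.inr 0))
          simpa [wY] using this
      have h0Y : (X (Sum.inr 0) : S N).IsWeightedHomogeneous (wY N) 0 := by
        have := isWeightedHomogeneous_X ℂ (wY N) (Sum.inr 0)
        simpa [wY] using this
      have := (IWH_pow hDY m).mul (IWH_pow h0Y (n - m))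
      simpa using this
    · -- wX homogeneity
      have hDX : D.IsWeightedHomogeneous (wX N) 1 := by
        rw [hD]
        apply IWH_sub
        · have := (isWeightedHomogeneous_X ℂ (wX N) (Sum.inl 0)).mul
            (isWeightedHomogeneous_X ℂ (wX N) (Sum.inr 1))
          simpa [wX] using this
        · have := (isWeightedHomogeneous_X ℂ (wX N) (Sum.inl 1)).mul
            (isWeightedHomogeneous_X ℂ (wX N) (Sum.inr 0))
          simpa [wX] using this
      have h0X : (X (Sum.inr 0) : S N).IsWeightedHomogeneous (wX N) 1 := by
        have := isWeightedHomogeneous_X ℂ (wX N) (Sum.inr 0)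
        simpa [wX] using this
      have h2 := (IWH_pow hDX m).mul (IWH_pow h0X (n - m))
      have h3 : m * 1 + (n - m) * 1 = n := by omega
      rwa [h3] at h2
    · -- delta = 0
      have hmix : ∀ j r : Fin (N + 1),
          deltaOp N (X (Sum.inl j) * X (Sum.inr r)) = X (Sum.inr j) * X (Sum.inr r) := by
        intro j r
        unfold deltaOp
        rw [Finset.sum_eq_single j]
        · rw [pderiv_mul, pderiv_X_self, pderiv_X_of_ne (by simp), mul_zero, add_zero, one_mul]
        · intro i _ hij
          rw [pderiv_mul, pderiv_X_of_ne (by simpa using hij.symm),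
            pderiv_X_of_ne (by simp), mul_zero, add_zero, zero_mul, mul_zero]
        · simp
      have hdD : deltaOp N D = 0 := by
        rw [hD, deltaOp_sub, hmix 0 1, hmix 1 0, mul_comm, sub_self]
      have hdX0 : deltaOp N (X (Sum.inr 0) : S N) = 0 := by
        unfold deltaOp
        apply Finset.sum_eq_zero
        intro i _
        rw [pderiv_X_of_ne (by simp), mul_zero]
      have hpow : ∀ (B : S N), deltaOp N B = 0 → ∀ k, deltaOp N (B ^ k) = 0 := by
        intro B hB k
        induction k with
        | zero => simpa using deltaOp_one
        | succ k ih => rw [pow_succ, deltaOp_mul, ih, hB, mul_zero, zero_mul, add_zero]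
      rw [deltaOp_mul, hpow D hdD m, hpow _ hdX0 (n - m), mul_zero, zero_mul, add_zero]
end
end

section
/- Let m, n ∈ ℕ with n ≥ m ≥ 1. The ℂ-vector space {A ∈ S : A is bihomogeneous of bidegree (m,n) and δ(A) = 0} has dimension binom(N+m,N)·binom(N+n,N) − binom(N+m−1,N)·binom(N+n+1,N). -/
open MvPolynomial

noncomputable section

/-- The operator `δ` as a `ℂ`-linear endomorphism of `S N`. -/
def deltaLM (N : ℕ) : S N →ₗ[ℂ] S N :=
  ∑ i : Fin (N + 1),
    (LinearMap.mulLeft ℂ (X (Sum.inr i) : S N)) ∘ₗ (pderiv (Sum.inl i)).toLinearMap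

/-- The space of bihomogeneous polynomials of bidegree `(m, n)` in `S N`. -/
def bihomSubmodule (N m n : ℕ) : Submodule ℂ (S N) :=
  weightedHomogeneousSubmodule ℂ (wY N) m ⊓ weightedHomogeneousSubmodule ℂ (wX N) n

namespace Stmt4

def epsLM (N : ℕ) : S N →ₗ[ℂ] S N :=
  ∑ i : Fin (N + 1),
    (LinearMap.mulLeft ℂ (X (Sum.inl i) : S N)) ∘ₗ (pderiv (Sum.inr i)).toLinearMap

variable {N : ℕ}

lemma deltaLM_apply (A : S N) :
    deltaLM N A = ∑ i : Fin (N + 1), X (Sum.inr i) * pderiv (Sum.inl i) A := by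
  simp [deltaLM]

lemma epsLM_apply (A : S N) :
    epsLM N A = ∑ i : Fin (N + 1), X (Sum.inl i) * pderiv (Sum.inr i) A := by
  simp [epsLM]

lemma X_mul_pderiv_monomial {σ' : Type*} (i : σ') (d : σ' →₀ ℕ) (c : ℂ) :
    (X i : MvPolynomial σ' ℂ) * pderiv i (monomial d c) = (d i : ℂ) • monomial d c := by
  rw [pderiv_monomial, smul_monomial]
  rcases Nat.eq_zero_or_pos (d i) with h | h
  · simp [h]
  · have h1 : Finsupp.single i 1 ≤ d := by
      rwa [Finsupp.single_le_iff]
    rw [X, monomial_mul, one_mul, add_tsub_cancel_of_le h1, smul_eq_mul, mul_comm]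

lemma pderiv_comm' {σ' : Type*} (i j : σ') (A : MvPolynomial σ' ℂ) :
    pderiv i (pderiv j A) = pderiv j (pderiv i A) := by
  induction A using MvPolynomial.induction_on' with
  | add p q hp hq => simp [map_add, hp, hq]
  | monomial d c =>
    rcases eq_or_ne i j with rfl | hij
    · rfl
    · have hd : ∀ (k l : σ'), k ≠ l → ((d - Finsupp.single k 1 : σ' →₀ ℕ)) l = d l := by
        intro k l hkl
        rw [Finsupp.tsub_apply, Finsupp.single_eq_of_ne hkl.symm, Nat.sub_zero]
      rw [pderiv_monomial, pderiv_monomial, pderiv_monomial, pderiv_monomial,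
        hd j i (Ne.symm hij), hd i j hij, tsub_right_comm]
      congr 1
      ring

lemma weight_wY_eq (d : (Fin (N + 1) ⊕ Fin (N + 1)) →₀ ℕ) :
    Finsupp.weight (wY N) d = ∑ i : Fin (N + 1), d (Sum.inl i) := by
  rw [Finsupp.weight_apply, Finsupp.sum_fintype _ _ (by simp)]
  rw [Fintype.sum_sum_type]
  simp [wY]

lemma weight_wX_eq (d : (Fin (N + 1) ⊕ Fin (N + 1)) →₀ ℕ) :
    Finsupp.weight (wX N) d = ∑ i : Fin (N + 1), d (Sum.inr i) := by
  rw [Finsupp.weight_apply, Finsupp.sum_fintype _ _ (by simp)]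
  rw [Fintype.sum_sum_type]
  simp [wX]

/-- Euler's identity for the `Y`-variables. -/
lemma euler_Y {a : ℕ} {A : S N} (hA : A.IsWeightedHomogeneous (wY N) a) :
    ∑ i : Fin (N + 1), (X (Sum.inl i) : S N) * pderiv (Sum.inl i) A = (a : ℂ) • A := by
  have key : ∀ d ∈ A.support,
      ∑ i : Fin (N + 1), (X (Sum.inl i) : S N) * pderiv (Sum.inl i)
        (monomial d (coeff d A)) = (a : ℂ) • monomial d (coeff d A) := by
    intro d hd
    have hw : Finsupp.weight (wY N) d = a := hA (mem_support_iff.mp hd)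
    calc ∑ i : Fin (N + 1), (X (Sum.inl i) : S N) * pderiv (Sum.inl i)
          (monomial d (coeff d A))
        = ∑ i : Fin (N + 1), ((d (Sum.inl i) : ℂ)) • monomial d (coeff d A) := by
          refine Finset.sum_congr rfl fun i _ => X_mul_pderiv_monomial _ _ _
      _ = ((∑ i : Fin (N + 1), d (Sum.inl i) : ℕ) : ℂ) • monomial d (coeff d A) := by
          rw [← Finset.sum_smul]; push_cast; ring_nf
      _ = (a : ℂ) • monomial d (coeff d A) := by rw [← weight_wY_eq, hw]
  conv_lhs => rw [A.as_sum]
  conv_rhs => rw [A.as_sum]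
  rw [Finset.smul_sum]
  simp only [map_sum, Finset.mul_sum]
  rw [Finset.sum_comm]
  exact Finset.sum_congr rfl key

lemma euler_X {b : ℕ} {A : S N} (hA : A.IsWeightedHomogeneous (wX N) b) :
    ∑ i : Fin (N + 1), (X (Sum.inr i) : S N) * pderiv (Sum.inr i) A = (b : ℂ) • A := by
  have key : ∀ d ∈ A.support,
      ∑ i : Fin (N + 1), (X (Sum.inr i) : S N) * pderiv (Sum.inr i)
        (monomial d (coeff d A)) = (b : ℂ) • monomial d (coeff d A) := by
    intro d hd
    have hw : Finsupp.weight (wX N) d = b := hA (mem_support_iff.mp hd)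
    calc ∑ i : Fin (N + 1), (X (Sum.inr i) : S N) * pderiv (Sum.inr i)
          (monomial d (coeff d A))
        = ∑ i : Fin (N + 1), ((d (Sum.inr i) : ℂ)) • monomial d (coeff d A) := by
          refine Finset.sum_congr rfl fun i _ => X_mul_pderiv_monomial _ _ _
      _ = ((∑ i : Fin (N + 1), d (Sum.inr i) : ℕ) : ℂ) • monomial d (coeff d A) := by
          rw [← Finset.sum_smul]; push_cast; ring_nf
      _ = (b : ℂ) • monomial d (coeff d A) := by rw [← weight_wX_eq, hw]
  conv_lhs => rw [A.as_sum]
  conv_rhs => rw [A.as_sum]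
  rw [Finset.smul_sum]
  simp only [map_sum, Finset.mul_sum]
  rw [Finset.sum_comm]
  exact Finset.sum_congr rfl key

lemma isWH_pderiv {σ' : Type*} {w : σ' → ℕ} {φ : MvPolynomial σ' ℂ} {k : ℕ} (i : σ')
    (h : φ.IsWeightedHomogeneous w (k + w i)) :
    (pderiv i φ).IsWeightedHomogeneous w k := by
  rw [← mem_weightedHomogeneousSubmodule]
  have hrw : pderiv i φ = ∑ d ∈ φ.support, pderiv i (monomial d (coeff d φ)) := by
    rw [← map_sum, ← φ.as_sum]
  rw [hrw]
  refine Submodule.sum_mem _ fun d hd => ?_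
  rw [pderiv_monomial]
  rcases Nat.eq_zero_or_pos (d i) with h0 | h0
  · rw [h0]
    push_cast
    rw [mul_zero, monomial_zero]
    exact Submodule.zero_mem _
  · rw [mem_weightedHomogeneousSubmodule]
    refine isWeightedHomogeneous_monomial _ _ _ ?_
    have hle : Finsupp.single i 1 ≤ d := by rwa [Finsupp.single_le_iff]
    have hw : Finsupp.weight w d = k + w i := h (mem_support_iff.mp hd)
    have hadd : Finsupp.weight w (d - Finsupp.single i 1)
        + Finsupp.weight w (Finsupp.single i 1) = Finsupp.weight w d := by
      rw [← map_add, tsub_add_cancel_of_le hle]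
    have hs : Finsupp.weight w (Finsupp.single i 1) = w i := by
      rw [Finsupp.weight_apply, Finsupp.sum_single_index] <;> simp
    omega

lemma pderiv_eq_zero_of_wh_zero {σ' : Type*} {w : σ' → ℕ} {φ : MvPolynomial σ' ℂ}
    (h : φ.IsWeightedHomogeneous w 0) {i : σ'} (hi : w i ≠ 0) : pderiv i φ = 0 := by
  have hrw : pderiv i φ = ∑ d ∈ φ.support, pderiv i (monomial d (coeff d φ)) := by
    rw [← map_sum, ← φ.as_sum]
  rw [hrw]
  refine Finset.sum_eq_zero fun d hd => ?_
  have h0 : Finsupp.weight w d = 0 := h (mem_support_iff.mp hd)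
  have hdi : d i = 0 := by
    have := Finsupp.le_weight w hi d
    omega
  rw [pderiv_monomial, hdi]
  push_cast
  rw [mul_zero, monomial_zero]

lemma deltaLM_mem {a b : ℕ} {A : S N} (hA : A ∈ bihomSubmodule N (a + 1) b) :
    deltaLM N A ∈ bihomSubmodule N a (b + 1) := by
  rw [deltaLM_apply]
  refine Submodule.sum_mem _ fun i _ => ?_
  obtain ⟨hY, hX⟩ := hA
  constructor
  · have h1 : (pderiv (Sum.inl i) A).IsWeightedHomogeneous (wY N) a :=
      isWH_pderiv _ (by simpa [wY] using hY)
    simpa [wY] using (isWeightedHomogeneous_X ℂ (wY N) (Sum.inr i)).mul h1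
  · have h1 : (pderiv (Sum.inl i) A).IsWeightedHomogeneous (wX N) b :=
      isWH_pderiv _ (by simpa [wX] using hX)
    have := (isWeightedHomogeneous_X ℂ (wX N) (Sum.inr i)).mul h1
    simpa [wX, add_comm] using this

lemma epsLM_mem {a b : ℕ} {A : S N} (hA : A ∈ bihomSubmodule N a (b + 1)) :
    epsLM N A ∈ bihomSubmodule N (a + 1) b := by
  rw [epsLM_apply]
  refine Submodule.sum_mem _ fun i _ => ?_
  obtain ⟨hY, hX⟩ := hA
  constructor
  · have h1 : (pderiv (Sum.inr i) A).IsWeightedHomogeneous (wY N) a :=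
      isWH_pderiv _ (by simpa [wY] using hY)
    have := (isWeightedHomogeneous_X ℂ (wY N) (Sum.inl i)).mul h1
    simpa [wY, add_comm] using this
  · have h1 : (pderiv (Sum.inr i) A).IsWeightedHomogeneous (wX N) b :=
      isWH_pderiv _ (by simpa [wX] using hX)
    simpa [wX] using (isWeightedHomogeneous_X ℂ (wX N) (Sum.inl i)).mul h1

lemma deltaLM_eq_zero {b : ℕ} {A : S N} (hA : A ∈ bihomSubmodule N 0 b) :
    deltaLM N A = 0 := by
  rw [deltaLM_apply]
  refine Finset.sum_eq_zero fun i _ => ?_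
  rw [pderiv_eq_zero_of_wh_zero hA.1 (by simp [wY]), mul_zero]

lemma pderiv_X_sum_left (i j : Fin (N + 1)) :
    pderiv (Sum.inl i) (X (Sum.inl j) : S N) = if j = i then 1 else 0 := by
  split
  · subst ‹j = i›; exact pderiv_X_self _
  · exact pderiv_X_of_ne (fun h => ‹¬ j = i› (Sum.inl.inj h))

lemma pderiv_X_sum_right (i j : Fin (N + 1)) :
    pderiv (Sum.inr i) (X (Sum.inr j) : S N) = if j = i then 1 else 0 := by
  split
  · subst ‹j = i›; exact pderiv_X_self _
  · exact pderiv_X_of_ne (fun h => ‹¬ j = i› (Sum.inr.inj h))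

lemma delta_eps_comm (A : S N) :
    deltaLM N (epsLM N A) - epsLM N (deltaLM N A) =
      (∑ i : Fin (N + 1), (X (Sum.inr i) : S N) * pderiv (Sum.inr i) A)
        - ∑ i : Fin (N + 1), (X (Sum.inl i) : S N) * pderiv (Sum.inl i) A := by
  have hδε : deltaLM N (epsLM N A) =
      (∑ i : Fin (N + 1), (X (Sum.inr i) : S N) * pderiv (Sum.inr i) A)
        + ∑ i : Fin (N + 1), ∑ j : Fin (N + 1),
            (X (Sum.inr i) : S N) * (X (Sum.inl j) * pderiv (Sum.inl i) (pderiv (Sum.inr j) A)) := by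
    rw [deltaLM_apply, epsLM_apply, ← Finset.sum_add_distrib]
    refine Finset.sum_congr rfl fun i _ => ?_
    rw [map_sum]
    have : ∀ j : Fin (N + 1), pderiv (Sum.inl i) ((X (Sum.inl j) : S N) * pderiv (Sum.inr j) A)
        = (if j = i then 1 else 0) * pderiv (Sum.inr j) A
          + X (Sum.inl j) * pderiv (Sum.inl i) (pderiv (Sum.inr j) A) := by
      intro j; rw [pderiv_mul, pderiv_X_sum_left]
    rw [Finset.sum_congr rfl fun j _ => this j, Finset.sum_add_distrib, mul_add]
    congr 1
    · simp [ite_mul, Finset.sum_ite_eq']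
    · rw [Finset.mul_sum]
  have hεδ : epsLM N (deltaLM N A) =
      (∑ i : Fin (N + 1), (X (Sum.inl i) : S N) * pderiv (Sum.inl i) A)
        + ∑ j : Fin (N + 1), ∑ i : Fin (N + 1),
            (X (Sum.inl j) : S N) * (X (Sum.inr i) * pderiv (Sum.inr j) (pderiv (Sum.inl i) A)) := by
    rw [deltaLM_apply, epsLM_apply, ← Finset.sum_add_distrib]
    refine Finset.sum_congr rfl fun j _ => ?_
    rw [map_sum]
    have : ∀ i : Fin (N + 1), pderiv (Sum.inr j) ((X (Sum.inr i) : S N) * pderiv (Sum.inl i) A)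
        = (if i = j then 1 else 0) * pderiv (Sum.inl i) A
          + X (Sum.inr i) * pderiv (Sum.inr j) (pderiv (Sum.inl i) A) := by
      intro i; rw [pderiv_mul, pderiv_X_sum_right]
    rw [Finset.sum_congr rfl fun i _ => this i, Finset.sum_add_distrib, mul_add]
    congr 1
    · simp [ite_mul, Finset.sum_ite_eq']
    · rw [Finset.mul_sum]
  have hcross : ∑ i : Fin (N + 1), ∑ j : Fin (N + 1),
      (X (Sum.inr i) : S N) * (X (Sum.inl j) * pderiv (Sum.inl i) (pderiv (Sum.inr j) A))
      = ∑ j : Fin (N + 1), ∑ i : Fin (N + 1),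
          (X (Sum.inl j) : S N) * (X (Sum.inr i) * pderiv (Sum.inr j) (pderiv (Sum.inl i) A)) := by
    rw [Finset.sum_comm]
    refine Finset.sum_congr rfl fun j _ => Finset.sum_congr rfl fun i _ => ?_
    rw [pderiv_comm']
    ring
  rw [hδε, hεδ, hcross]
  abel

lemma comm_of_mem {a b : ℕ} {A : S N} (hA : A ∈ bihomSubmodule N a b) :
    deltaLM N (epsLM N A) = epsLM N (deltaLM N A) + ((b : ℂ) - a) • A := by
  have h := delta_eps_comm A
  rw [euler_X hA.2, euler_Y hA.1] at h
  have h2 : deltaLM N (epsLM N A) = epsLM N (deltaLM N A)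
      + (deltaLM N (epsLM N A) - epsLM N (deltaLM N A)) := by abel
  rw [h2, h, sub_smul]

lemma pow_epsLM_mem {k a b : ℕ} {A : S N} (hA : A ∈ bihomSubmodule N a (b + k)) :
    (epsLM N ^ k) A ∈ bihomSubmodule N (a + k) b := by
  induction k generalizing a b A with
  | zero => simpa using hA
  | succ k ih =>
    rw [pow_succ']
    rw [Module.End.mul_apply]
    rw [show b + (k + 1) = (b + 1) + k by omega] at hA
    have := epsLM_mem (ih hA)
    rwa [show a + k + 1 = a + (k + 1) by omega] at this

lemma pow_deltaLM_mem {j a b : ℕ} {A : S N} (hA : A ∈ bihomSubmodule N (a + j) b) :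
    (deltaLM N ^ j) A ∈ bihomSubmodule N a (b + j) := by
  induction j generalizing a b A with
  | zero => simpa using hA
  | succ j ih =>
    rw [pow_succ, Module.End.mul_apply]
    have h1 : deltaLM N A ∈ bihomSubmodule N (a + j) (b + 1) :=
      deltaLM_mem (by rwa [show a + (j + 1) = a + j + 1 by omega] at hA)
    have := ih h1
    rwa [show b + 1 + j = b + (j + 1) by omega] at this

lemma pow_deltaLM_eq_zero {a b : ℕ} {A : S N} (hA : A ∈ bihomSubmodule N a b) :
    (deltaLM N ^ (a + 1)) A = 0 := by
  rw [pow_succ', Module.End.mul_apply]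
  have h1 : (deltaLM N ^ a) A ∈ bihomSubmodule N 0 (b + a) :=
    pow_deltaLM_mem (by simpa using hA)
  exact deltaLM_eq_zero h1

/-- The iterated commutator identity `δ ∘ ε^{j+1} = ε^{j+1} ∘ δ + (j+1)(c+j+1-a-j) ε^j`. -/
lemma pow_comm : ∀ (j : ℕ) {a c : ℕ} {A : S N}, A ∈ bihomSubmodule N a (c + j + 1) →
    deltaLM N ((epsLM N ^ (j + 1)) A) =
      (epsLM N ^ (j + 1)) (deltaLM N A)
        + (((j : ℂ) + 1) * (((c : ℂ) + j + 1) - a - j)) • (epsLM N ^ j) A := by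
  intro j
  induction j with
  | zero =>
    intro a c A hA
    rw [pow_one, pow_zero, Module.End.one_apply]
    rw [show c + 0 + 1 = c + 1 by omega] at hA
    rw [comm_of_mem hA]
    congr 1
    push_cast
    ring
  | succ j ih =>
    intro a c A hA
    have hA' : A ∈ bihomSubmodule N a ((c + j + 1) + 1) := by
      rwa [show (c + j + 1) + 1 = c + (j + 1) + 1 by omega]
    have hεA : epsLM N A ∈ bihomSubmodule N (a + 1) (c + j + 1) := epsLM_mem hA'
    have e1 : (epsLM N ^ (j + 1 + 1)) A = (epsLM N ^ (j + 1)) (epsLM N A) := by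
      rw [pow_succ (epsLM N) (j + 1), Module.End.mul_apply]
    have e2 : (epsLM N ^ (j + 1)) (epsLM N (deltaLM N A))
        = (epsLM N ^ (j + 1 + 1)) (deltaLM N A) := by
      rw [pow_succ (epsLM N) (j + 1), Module.End.mul_apply]
    have e3 : (epsLM N ^ j) (epsLM N A) = (epsLM N ^ (j + 1)) A := by
      rw [pow_succ (epsLM N) j, Module.End.mul_apply]
    rw [e1, ih hεA, comm_of_mem hA', map_add, map_smul, e2, e3]
    rw [add_assoc, ← add_smul]
    congr 2
    push_cast
    ring

/-- Coefficient sequence for the explicit preimage construction. -/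
def cseq (a b : ℕ) : ℕ → ℂ
  | 0 => (((b - a : ℕ) : ℂ))⁻¹
  | (j + 1) => - cseq a b j / ((((j + 2) * (b - a + (j + 1)) : ℕ)) : ℂ)

lemma cseq_zero_mul {a b : ℕ} (hab : a < b) :
    cseq a b 0 * (((1 * (b - a + 0) : ℕ)) : ℂ) = 1 := by
  have h0 : (b - a : ℕ) ≠ 0 := by omega
  have : ((b - a : ℕ) : ℂ) ≠ 0 := Nat.cast_ne_zero.mpr h0
  simp only [cseq, one_mul, Nat.add_zero]
  field_simp

lemma cseq_succ_mul {a b : ℕ} (hab : a < b) (j : ℕ) :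
    cseq a b (j + 1) * ((((j + 2) * (b - a + (j + 1)) : ℕ)) : ℂ) = - cseq a b j := by
  have : ((((j + 2) * (b - a + (j + 1)) : ℕ)) : ℂ) ≠ 0 := by
    refine Nat.cast_ne_zero.mpr ?_
    have : 0 < (j + 2) * (b - a + (j + 1)) := by positivity
    omega
  rw [cseq, div_mul_cancel₀ _ this]

lemma surj {a b : ℕ} (hab : a < b) {B : S N} (hB : B ∈ bihomSubmodule N a b) :
    ∃ A ∈ bihomSubmodule N (a + 1) (b - 1), deltaLM N A = B := by
  have hδ : ∀ j, j ≤ a → (deltaLM N ^ j) B ∈ bihomSubmodule N (a - j) (b + j) :=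
    fun j hj => pow_deltaLM_mem (by rwa [show (a - j) + j = a by omega])
  set T : ℕ → S N := fun j => (epsLM N ^ (j + 1)) ((deltaLM N ^ j) B) with hTdef
  have hT : ∀ j, j ≤ a → T j ∈ bihomSubmodule N (a + 1) (b - 1) := by
    intro j hj
    have h1 : (deltaLM N ^ j) B ∈ bihomSubmodule N (a - j) ((b - 1) + (j + 1)) := by
      have := hδ j hj
      rwa [show b + j = (b - 1) + (j + 1) by omega] at this
    have := pow_epsLM_mem h1
    rwa [show (a - j) + (j + 1) = a + 1 by omega] at this
  have hstep : ∀ j, j ≤ a → deltaLM N (T j)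
      = (epsLM N ^ (j + 1)) ((deltaLM N ^ (j + 1)) B)
        + ((((j + 1) * (b - a + j) : ℕ)) : ℂ) • (epsLM N ^ j) ((deltaLM N ^ j) B) := by
    intro j hj
    have hmem : (deltaLM N ^ j) B ∈ bihomSubmodule N (a - j) ((b - 1) + j + 1) := by
      have := hδ j hj
      rwa [show b + j = (b - 1) + j + 1 by omega] at this
    have h1 := pow_comm j hmem
    have h2 : deltaLM N ((deltaLM N ^ j) B) = (deltaLM N ^ (j + 1)) B := by
      rw [pow_succ' (deltaLM N) j, Module.End.mul_apply]
    rw [hTdef]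
    simp only
    rw [h1, h2]
    congr 2
    have hb1 : (1 : ℕ) ≤ b := by omega
    push_cast [Nat.cast_sub hb1, Nat.cast_sub hj, Nat.cast_sub (le_of_lt hab)]
    ring
  set W : ℕ → S N := fun t => ∑ j ∈ Finset.range (t + 1), cseq a b j • T j with hWdef
  have main : ∀ t, t ≤ a → deltaLM N (W t)
      = B + cseq a b t • ((epsLM N ^ (t + 1)) ((deltaLM N ^ (t + 1)) B)) := by
    intro t
    induction t with
    | zero =>
      intro _
      have hsplit : W 0 = cseq a b 0 • T 0 := by
        rw [hWdef]
        simp only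
        rw [Finset.sum_range_succ, Finset.sum_range_zero, zero_add]
      rw [hsplit, map_smul, hstep 0 (Nat.zero_le a), smul_add, smul_smul, cseq_zero_mul hab]
      simp only [pow_zero, Module.End.one_apply, one_smul]
      abel
    | succ t ih =>
      intro ht
      have ht' : t ≤ a := by omega
      have hsplit : W (t + 1) = W t + cseq a b (t + 1) • T (t + 1) := by
        rw [hWdef]
        simp only
        rw [Finset.sum_range_succ]
      rw [hsplit, map_add, map_smul, ih ht', hstep (t + 1) ht]
      rw [smul_add, smul_smul, cseq_succ_mul hab t, neg_smul]
      abel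
  have hfin : deltaLM N (W a) = B := by
    rw [main a le_rfl, pow_deltaLM_eq_zero hB, map_zero, smul_zero, add_zero]
  refine ⟨W a, ?_, hfin⟩
  rw [hWdef]
  refine Submodule.sum_mem _ fun j hj => Submodule.smul_mem _ _ ?_
  exact hT j (by simpa using Nat.lt_succ_iff.mp (Finset.mem_range.mp hj))

def degSet (N a b : ℕ) : Set ((Fin (N + 1) ⊕ Fin (N + 1)) →₀ ℕ) :=
  {d | Finsupp.weight (wY N) d = a ∧ Finsupp.weight (wX N) d = b}

lemma bihom_eq_supported (N a b : ℕ) :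
    bihomSubmodule N a b = AddMonoidAlgebra.supported ℂ ℂ (degSet N a b) := by
  rw [bihomSubmodule, weightedHomogeneousSubmodule_eq_finsupp_supported,
    weightedHomogeneousSubmodule_eq_finsupp_supported]
  unfold AddMonoidAlgebra.supported
  rw [← Submodule.comap_inf, ← Finsupp.supported_inter]
  rfl

def symEquiv (M : Type*) [DecidableEq M] (k : ℕ) :
    {f : M →₀ ℕ // (f.sum fun _ n => n) = k} ≃ Sym M k :=
  Equiv.subtypeEquiv (Multiset.toFinsupp.symm.toEquiv : (M →₀ ℕ) ≃ Multiset M)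
    (by
      intro f
      have h1 : Multiset.toFinsupp.symm.toEquiv f = Finsupp.toMultiset f := by
        simp [Multiset.toFinsupp]
      rw [h1]
      rw [show (Finsupp.toMultiset f).card = f.sum fun _ n => n from Finsupp.card_toMultiset f]
      )

def degSetEquiv (N a b : ℕ) :
    ↥(degSet N a b) ≃ Sym (Fin (N + 1)) a × Sym (Fin (N + 1)) b :=
  ((Equiv.subtypeEquiv (Finsupp.sumFinsuppEquivProdFinsupp)
      (by
        intro d
        have h1 : Finsupp.weight (wY N) d
            = ((Finsupp.sumFinsuppEquivProdFinsupp d).1.sum fun _ n => n) := by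
          rw [weight_wY_eq, Finsupp.sum_fintype _ _ (by simp)]
          refine Finset.sum_congr rfl fun i _ => ?_
          rw [Finsupp.fst_sumFinsuppEquivProdFinsupp]
        have h2 : Finsupp.weight (wX N) d
            = ((Finsupp.sumFinsuppEquivProdFinsupp d).2.sum fun _ n => n) := by
          rw [weight_wX_eq, Finsupp.sum_fintype _ _ (by simp)]
          refine Finset.sum_congr rfl fun i _ => ?_
          rw [Finsupp.snd_sumFinsuppEquivProdFinsupp]
        show (Finsupp.weight (wY N) d = a ∧ Finsupp.weight (wX N) d = b) ↔ _
        rw [h1, h2])).trans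
    (Equiv.subtypeProdEquivProd)).trans
    (Equiv.prodCongr (symEquiv _ a) (symEquiv _ b))

noncomputable instance degSetFintype (N a b : ℕ) : Fintype (degSet N a b) :=
  Fintype.ofEquiv _ (degSetEquiv N a b).symm

lemma card_degSet (N a b : ℕ) :
    Fintype.card (degSet N a b) = (N + a).choose N * (N + b).choose N := by
  rw [Fintype.card_congr (degSetEquiv N a b), Fintype.card_prod]
  rw [Sym.card_sym_eq_choose, Sym.card_sym_eq_choose, Fintype.card_fin]
  congr 1
  · rw [show N + 1 + a - 1 = N + a by omega]
    rw [← Nat.choose_symm (by omega : a ≤ N + a), show N + a - a = N by omega]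
  · rw [show N + 1 + b - 1 = N + b by omega]
    rw [← Nat.choose_symm (by omega : b ≤ N + b), show N + b - b = N by omega]

def bihomEquivFun (N a b : ℕ) :
    ↥(bihomSubmodule N a b) ≃ₗ[ℂ] (↥(degSet N a b) → ℂ) :=
  ((LinearEquiv.ofEq _ _ (bihom_eq_supported N a b)).trans
    (AddMonoidAlgebra.supportedEquivFinsupp (degSet N a b))).trans
    (Finsupp.linearEquivFunOnFinite ℂ ℂ _)

lemma bihom_fd (N a b : ℕ) : FiniteDimensional ℂ (bihomSubmodule N a b) :=
  LinearEquiv.finiteDimensional (bihomEquivFun N a b).symm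

lemma finrank_bihom (N a b : ℕ) :
    Module.finrank ℂ (bihomSubmodule N a b) = (N + a).choose N * (N + b).choose N := by
  rw [(bihomEquivFun N a b).finrank_eq, Module.finrank_pi, card_degSet]

end Stmt4


open Stmt4 in
/-- For `n ≥ m ≥ 1`, the space of bihomogeneous solutions of `δ(A) = 0` of
bidegree `(m, n)` has dimension
`C(N+m,N)·C(N+n,N) − C(N+m−1,N)·C(N+n+1,N)`. -/
theorem statement4 (N : ℕ) (hN : 2 ≤ N) (m n : ℕ) (hm : 1 ≤ m) (hmn : m ≤ n) :
    (Module.finrank ℂ ↥(bihomSubmodule N m n ⊓ LinearMap.ker (deltaLM N)) : ℤ) =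
      (Nat.choose (N + m) N : ℤ) * Nat.choose (N + n) N -
        (Nat.choose (N + m - 1) N : ℤ) * Nat.choose (N + n + 1) N := by
  obtain ⟨m', rfl⟩ : ∃ m', m = m' + 1 := ⟨m - 1, by omega⟩
  haveI := bihom_fd N (m' + 1) n
  haveI := bihom_fd N m' (n + 1)
  have hmaps : ∀ x ∈ bihomSubmodule N (m' + 1) n,
      deltaLM N x ∈ bihomSubmodule N m' (n + 1) := fun x hx => deltaLM_mem hx
  set f := (deltaLM N).restrict hmaps with hfdef
  have hsurj : LinearMap.range f = ⊤ := by
    rw [LinearMap.range_eq_top]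
    rintro ⟨B, hB⟩
    obtain ⟨A, hA, hAB⟩ := surj (show m' < n + 1 by omega) hB
    rw [show n + 1 - 1 = n by omega] at hA
    exact ⟨⟨A, hA⟩, Subtype.ext hAB⟩
  have hrn := LinearMap.finrank_range_add_finrank_ker f
  rw [hsurj, finrank_top] at hrn
  have hker : Module.finrank ℂ (LinearMap.ker f)
      = Module.finrank ℂ ↥(bihomSubmodule N (m' + 1) n ⊓ LinearMap.ker (deltaLM N)) := by
    rw [hfdef, LinearMap.ker_restrict hmaps]
    have hco : (LinearMap.ker (deltaLM N)).comap (bihomSubmodule N (m' + 1) n).subtype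
        = (bihomSubmodule N (m' + 1) n ⊓ LinearMap.ker (deltaLM N)).comap
            (bihomSubmodule N (m' + 1) n).subtype := by
      rw [Submodule.comap_inf, Submodule.comap_subtype_self, top_inf_eq]
    rw [hco]
    exact (Submodule.comapSubtypeEquivOfLe inf_le_left).finrank_eq
  rw [hker] at hrn
  rw [finrank_bihom, finrank_bihom] at hrn
  have h1 : N + (m' + 1) - 1 = N + m' := by omega
  rw [h1]
  have h2 : N + (m' + 1) = N + m' + 1 := by omega
  rw [h2] at hrn ⊢
  rw [show N + (n + 1) = N + n + 1 by omega] at hrn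
  zify at hrn
  linarith
end
end

section
/- Let m, n ∈ ℕ with n ≥ m ≥ 1. For every bihomogeneous B ∈ S of bidegree (m−1, n+1) there exists a bihomogeneous A ∈ S of bidegree (m,n) with δ(A) = B. -/
open MvPolynomial

noncomputable section

def epsOp (N : ℕ) (A : S N) : S N :=
  ∑ i : Fin (N + 1), X (Sum.inl i) * pderiv (Sum.inr i) A

variable {N : ℕ}

lemma pderiv_pderiv_comm (i j : Fin (N+1) ⊕ Fin (N+1)) (φ : S N) :
    pderiv i (pderiv j φ) = pderiv j (pderiv i φ) := by
  induction φ using MvPolynomial.induction_on' with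
  | add p q hp hq => simp [hp, hq]
  | monomial d c =>
    rcases eq_or_ne i j with rfl | hij
    · rfl
    · have h1 : (d - Finsupp.single j 1 : (Fin (N+1) ⊕ Fin (N+1)) →₀ ℕ) i = d i := by
        rw [Finsupp.tsub_apply, Finsupp.single_eq_of_ne hij, tsub_zero]
      have h2 : (d - Finsupp.single i 1 : (Fin (N+1) ⊕ Fin (N+1)) →₀ ℕ) j = d j := by
        rw [Finsupp.tsub_apply, Finsupp.single_eq_of_ne hij.symm, tsub_zero]
      simp only [pderiv_monomial, tsub_tsub, h1, h2]
      rw [add_comm (Finsupp.single j 1), mul_right_comm]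

lemma deltaOp_add (A B : S N) : deltaOp N (A + B) = deltaOp N A + deltaOp N B := by
  simp [deltaOp, mul_add, Finset.sum_add_distrib]

lemma deltaOp_smul (c : ℂ) (A : S N) : deltaOp N (c • A) = c • deltaOp N A := by
  simp [deltaOp, Finset.smul_sum, mul_smul_comm]

lemma deltaOp_sub (A B : S N) : deltaOp N (A - B) = deltaOp N A - deltaOp N B := by
  simp [deltaOp, mul_sub, Finset.sum_sub_distrib]

lemma epsOp_add (A B : S N) : epsOp N (A + B) = epsOp N A + epsOp N B := by
  simp [epsOp, mul_add, Finset.sum_add_distrib]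

lemma epsOp_smul (c : ℂ) (A : S N) : epsOp N (c • A) = c • epsOp N A := by
  simp [epsOp, Finset.smul_sum, mul_smul_comm]

lemma weight_wY (d : (Fin (N+1) ⊕ Fin (N+1)) →₀ ℕ) :
    Finsupp.weight (wY N) d = ∑ i : Fin (N+1), d (Sum.inl i) := by
  rw [Finsupp.weight_apply, Finsupp.sum_fintype _ _ (fun i => by simp)]
  rw [Fintype.sum_sum_type]
  simp [wY]

lemma weight_wX (d : (Fin (N+1) ⊕ Fin (N+1)) →₀ ℕ) :
    Finsupp.weight (wX N) d = ∑ i : Fin (N+1), d (Sum.inr i) := by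
  rw [Finsupp.weight_apply, Finsupp.sum_fintype _ _ (fun i => by simp)]
  rw [Fintype.sum_sum_type]
  simp [wX]

lemma isWH_pderiv (w : (Fin (N+1) ⊕ Fin (N+1)) → ℕ) (j : Fin (N+1) ⊕ Fin (N+1))
    {φ : S N} {m : ℕ} (hφ : φ.IsWeightedHomogeneous w m) :
    (pderiv j φ).IsWeightedHomogeneous w (m - w j) := by
  rw [φ.as_sum, map_sum]
  apply IsWeightedHomogeneous.sum
  intro d hd
  rw [pderiv_monomial]
  by_cases hc : coeff d φ * (d j : ℂ) = 0
  · rw [hc, map_zero]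
    exact isWeightedHomogeneous_zero _ _ _
  · have hdj : d j ≠ 0 := fun h => hc (by simp [h])
    have hcoeff : coeff d φ ≠ 0 := fun h => hc (by simp [h])
    have hwd : Finsupp.weight w d = m := hφ hcoeff
    apply isWeightedHomogeneous_monomial
    have hle : Finsupp.single j 1 ≤ d := by
      rw [Finsupp.single_le_iff]
      omega
    have : d - Finsupp.single j 1 + Finsupp.single j 1 = d := tsub_add_cancel_of_le hle
    have hw : Finsupp.weight w (d - Finsupp.single j 1) + Finsupp.weight w (Finsupp.single j 1)
        = m := by rw [← map_add, this, hwd]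
    have hsingle : Finsupp.weight w (Finsupp.single j 1) = w j := by
      rw [Finsupp.weight_apply, Finsupp.sum_single_index] <;> simp
    omega

lemma isWH_X_mul (w : (Fin (N+1) ⊕ Fin (N+1)) → ℕ) (j : Fin (N+1) ⊕ Fin (N+1))
    {φ : S N} {m : ℕ} (hφ : φ.IsWeightedHomogeneous w m) :
    (X j * φ).IsWeightedHomogeneous w (w j + m) :=
  (isWeightedHomogeneous_X ℂ w j).mul hφ

lemma X_mul_pderiv_monomial (j : Fin (N+1) ⊕ Fin (N+1)) (d : (Fin (N+1) ⊕ Fin (N+1)) →₀ ℕ)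
    (c : ℂ) : X j * pderiv j (monomial d c) = (d j : ℂ) • monomial d c := by
  rw [pderiv_monomial, X, monomial_mul]
  by_cases hdj : d j = 0
  · simp [hdj]
  · have hle : Finsupp.single j 1 ≤ d := by
      rw [Finsupp.single_le_iff]; omega
    rw [add_tsub_cancel_of_le hle, smul_monomial, smul_eq_mul]
    congr 1
    ring

lemma euler_Y {φ : S N} {a : ℕ} (hφ : φ.IsWeightedHomogeneous (wY N) a) :
    ∑ i : Fin (N+1), X (Sum.inl i) * pderiv (Sum.inl i) φ = (a : ℂ) • φ := by
  conv_lhs => rw [φ.as_sum]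
  have : ∀ i : Fin (N+1), X (Sum.inl i) * pderiv (Sum.inl i) (∑ d ∈ φ.support, monomial d (coeff d φ))
      = ∑ d ∈ φ.support, (d (Sum.inl i) : ℂ) • monomial d (coeff d φ) := by
    intro i
    rw [map_sum, Finset.mul_sum]
    exact Finset.sum_congr rfl fun d _ => X_mul_pderiv_monomial _ _ _
  rw [Finset.sum_congr rfl fun i _ => this i, Finset.sum_comm]
  conv_rhs => rw [φ.as_sum, Finset.smul_sum]
  refine Finset.sum_congr rfl fun d hd => ?_
  rw [← Finset.sum_smul]
  congr 1
  have hwd : Finsupp.weight (wY N) d = a :=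
    hφ (by rwa [MvPolynomial.mem_support_iff] at hd)
  rw [weight_wY] at hwd
  rw [← hwd]
  push_cast
  rfl

lemma pderiv_inl_eq_zero {φ : S N} (hφ : φ.IsWeightedHomogeneous (wY N) 0) (i : Fin (N+1)) :
    pderiv (Sum.inl i) φ = 0 := by
  rw [φ.as_sum, map_sum]
  apply Finset.sum_eq_zero
  intro d hd
  have h0 : Finsupp.weight (wY N) d = 0 :=
    hφ (by rwa [MvPolynomial.mem_support_iff] at hd)
  rw [weight_wY] at h0
  have : d (Sum.inl i) = 0 := by
    have := Finset.sum_eq_zero_iff.mp h0 i (Finset.mem_univ i)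
    exact this
  rw [pderiv_monomial, this]
  simp

lemma euler_X {φ : S N} {b : ℕ} (hφ : φ.IsWeightedHomogeneous (wX N) b) :
    ∑ i : Fin (N+1), X (Sum.inr i) * pderiv (Sum.inr i) φ = (b : ℂ) • φ := by
  conv_lhs => rw [φ.as_sum]
  have : ∀ i : Fin (N+1), X (Sum.inr i) * pderiv (Sum.inr i) (∑ d ∈ φ.support, monomial d (coeff d φ))
      = ∑ d ∈ φ.support, (d (Sum.inr i) : ℂ) • monomial d (coeff d φ) := by
    intro i
    rw [map_sum, Finset.mul_sum]
    exact Finset.sum_congr rfl fun d _ => X_mul_pderiv_monomial _ _ _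
  rw [Finset.sum_congr rfl fun i _ => this i, Finset.sum_comm]
  conv_rhs => rw [φ.as_sum, Finset.smul_sum]
  refine Finset.sum_congr rfl fun d hd => ?_
  rw [← Finset.sum_smul]
  congr 1
  have hwd : Finsupp.weight (wX N) d = b :=
    hφ (by rwa [MvPolynomial.mem_support_iff] at hd)
  rw [weight_wX] at hwd
  rw [← hwd]
  push_cast
  rfl

lemma wY_inl (i : Fin (N+1)) : wY N (Sum.inl i) = 1 := rfl
lemma wY_inr (i : Fin (N+1)) : wY N (Sum.inr i) = 0 := rfl
lemma wX_inl (i : Fin (N+1)) : wX N (Sum.inl i) = 0 := rfl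
lemma wX_inr (i : Fin (N+1)) : wX N (Sum.inr i) = 1 := rfl

lemma Bihom.add {a b : ℕ} {φ ψ : S N} (hφ : Bihom N a b φ) (hψ : Bihom N a b ψ) :
    Bihom N a b (φ + ψ) := ⟨hφ.1.add hψ.1, hφ.2.add hψ.2⟩

lemma Bihom.smul {a b : ℕ} {φ : S N} (c : ℂ) (hφ : Bihom N a b φ) : Bihom N a b (c • φ) := by
  constructor
  · have := Submodule.smul_mem (weightedHomogeneousSubmodule ℂ (wY N) a) c
      ((mem_weightedHomogeneousSubmodule _ _ _ _).2 hφ.1)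
    exact (mem_weightedHomogeneousSubmodule _ _ _ _).1 this
  · have := Submodule.smul_mem (weightedHomogeneousSubmodule ℂ (wX N) b) c
      ((mem_weightedHomogeneousSubmodule _ _ _ _).2 hφ.2)
    exact (mem_weightedHomogeneousSubmodule _ _ _ _).1 this

lemma Bihom.sub {a b : ℕ} {φ ψ : S N} (hφ : Bihom N a b φ) (hψ : Bihom N a b ψ) :
    Bihom N a b (φ - ψ) := by
  rw [sub_eq_add_neg, ← neg_one_smul ℂ ψ]
  exact hφ.add (hψ.smul (-1))

lemma bihom_delta {a b : ℕ} {φ : S N} (hφ : Bihom N a b φ) :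
    Bihom N (a - 1) (b + 1) (deltaOp N φ) := by
  constructor
  · apply IsWeightedHomogeneous.sum
    intro i _
    have h := isWH_pderiv (wY N) (Sum.inl i) hφ.1
    rw [wY_inl] at h
    have := isWH_X_mul (wY N) (Sum.inr i) h
    rwa [wY_inr, zero_add] at this
  · apply IsWeightedHomogeneous.sum
    intro i _
    have h := isWH_pderiv (wX N) (Sum.inl i) hφ.2
    rw [wX_inl, Nat.sub_zero] at h
    have := isWH_X_mul (wX N) (Sum.inr i) h
    rw [wX_inr] at this; rwa [Nat.add_comm b 1]

lemma bihom_eps {a b : ℕ} {φ : S N} (hφ : Bihom N a b φ) :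
    Bihom N (a + 1) (b - 1) (epsOp N φ) := by
  constructor
  · apply IsWeightedHomogeneous.sum
    intro i _
    have h := isWH_pderiv (wY N) (Sum.inr i) hφ.1
    rw [wY_inr, Nat.sub_zero] at h
    have := isWH_X_mul (wY N) (Sum.inl i) h
    rw [wY_inl] at this; rwa [Nat.add_comm a 1]
  · apply IsWeightedHomogeneous.sum
    intro i _
    have h := isWH_pderiv (wX N) (Sum.inr i) hφ.2
    rw [wX_inr] at h
    have := isWH_X_mul (wX N) (Sum.inl i) h
    rwa [wX_inl, zero_add] at this

lemma pderiv_inl_epsOp (i : Fin (N+1)) (φ : S N) :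
    pderiv (Sum.inl i) (epsOp N φ) = pderiv (Sum.inr i) φ
      + ∑ j : Fin (N+1), X (Sum.inl j) * pderiv (Sum.inl i) (pderiv (Sum.inr j) φ) := by
  unfold epsOp
  rw [map_sum]
  rw [Finset.sum_congr rfl fun j _ => pderiv_mul (i := Sum.inl i)
    (f := X (Sum.inl j)) (g := pderiv (Sum.inr j) φ), Finset.sum_add_distrib]
  congr 1
  rw [Finset.sum_eq_single i]
  · rw [pderiv_X_self, one_mul]
  · intro j _ hji
    rw [pderiv_X_of_ne (by simp [hji]), zero_mul]
  · intro h
    exact absurd (Finset.mem_univ i) h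

lemma pderiv_inr_deltaOp (j : Fin (N+1)) (φ : S N) :
    pderiv (Sum.inr j) (deltaOp N φ) = pderiv (Sum.inl j) φ
      + ∑ i : Fin (N+1), X (Sum.inr i) * pderiv (Sum.inr j) (pderiv (Sum.inl i) φ) := by
  unfold deltaOp
  rw [map_sum]
  rw [Finset.sum_congr rfl fun i _ => pderiv_mul (i := Sum.inr j)
    (f := X (Sum.inr i)) (g := pderiv (Sum.inl i) φ), Finset.sum_add_distrib]
  congr 1
  rw [Finset.sum_eq_single j]
  · rw [pderiv_X_self, one_mul]
  · intro i _ hij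
    rw [pderiv_X_of_ne (by simp [hij]), zero_mul]
  · intro h
    exact absurd (Finset.mem_univ j) h

lemma comm1 {a b : ℕ} {φ : S N} (hφ : Bihom N a b φ) :
    deltaOp N (epsOp N φ) = epsOp N (deltaOp N φ) + ((b : ℂ) - (a : ℂ)) • φ := by
  have hL : deltaOp N (epsOp N φ) = (b : ℂ) • φ
      + ∑ i : Fin (N+1), ∑ j : Fin (N+1),
          X (Sum.inr i) * (X (Sum.inl j) * pderiv (Sum.inl i) (pderiv (Sum.inr j) φ)) := by
    unfold deltaOp
    rw [Finset.sum_congr rfl fun i _ => by rw [pderiv_inl_epsOp i φ, mul_add, Finset.mul_sum]]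
    rw [Finset.sum_add_distrib, euler_X hφ.2]
  have hR : epsOp N (deltaOp N φ) = (a : ℂ) • φ
      + ∑ j : Fin (N+1), ∑ i : Fin (N+1),
          X (Sum.inl j) * (X (Sum.inr i) * pderiv (Sum.inr j) (pderiv (Sum.inl i) φ)) := by
    unfold epsOp
    rw [Finset.sum_congr rfl fun j _ => by rw [pderiv_inr_deltaOp j φ, mul_add, Finset.mul_sum]]
    rw [Finset.sum_add_distrib, euler_Y hφ.1]
  have hD : ∑ i : Fin (N+1), ∑ j : Fin (N+1),
          X (Sum.inr i) * (X (Sum.inl j) * pderiv (Sum.inl i) (pderiv (Sum.inr j) φ))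
      = ∑ j : Fin (N+1), ∑ i : Fin (N+1),
          X (Sum.inl j) * (X (Sum.inr i) * pderiv (Sum.inr j) (pderiv (Sum.inl i) φ)) := by
    rw [Finset.sum_comm]
    refine Finset.sum_congr rfl fun j _ => Finset.sum_congr rfl fun i _ => ?_
    rw [pderiv_pderiv_comm, mul_left_comm]
  rw [hL, hR, hD]
  rw [sub_smul]
  abel

lemma bihom_eps_iter {a b k : ℕ} {φ : S N} (hk : k ≤ b) (hφ : Bihom N a b φ) :
    Bihom N (a + k) (b - k) ((epsOp N)^[k] φ) := by
  induction k with
  | zero => simpa using hφ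
  | succ k ih =>
    rw [Function.iterate_succ_apply']
    have h := bihom_eps (ih (by omega))
    have e1 : a + k + 1 = a + (k + 1) := by omega
    have e2 : b - k - 1 = b - (k + 1) := by omega
    rwa [e1, e2] at h

lemma bihom_delta_iter {a b k : ℕ} {φ : S N} (hk : k ≤ a) (hφ : Bihom N a b φ) :
    Bihom N (a - k) (b + k) ((deltaOp N)^[k] φ) := by
  induction k with
  | zero => simpa using hφ
  | succ k ih =>
    rw [Function.iterate_succ_apply']
    have h := bihom_delta (ih (by omega))
    have e1 : a - k - 1 = a - (k + 1) := by omega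
    have e2 : b + k + 1 = b + (k + 1) := by omega
    rwa [e1, e2] at h

lemma comm_pow {a b : ℕ} (k : ℕ) (hk : k ≤ b) {φ : S N} (hφ : Bihom N a b φ) :
    deltaOp N ((epsOp N)^[k] φ)
      = (epsOp N)^[k] (deltaOp N φ)
        + ((k : ℂ) * ((b : ℂ) - (a : ℂ) - (k : ℂ) + 1)) • (epsOp N)^[k - 1] φ := by
  induction k with
  | zero => simp
  | succ k ih =>
    rw [Function.iterate_succ_apply']
    have hbk : ((b - k : ℕ) : ℂ) = (b : ℂ) - (k : ℂ) := by
      push_cast [Nat.cast_sub (by omega : k ≤ b)]; ring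
    have hcomm := comm1 (bihom_eps_iter (by omega : k ≤ b) hφ)
    rw [hbk] at hcomm
    push_cast at hcomm
    rw [hcomm, ih (by omega)]
    rw [epsOp_add, epsOp_smul, ← Function.iterate_succ_apply' (epsOp N) k (deltaOp N φ)]
    rcases Nat.eq_zero_or_pos k with rfl | hkpos
    · norm_num
    · have hk1 : k - 1 + 1 = k := by omega
      rw [← Function.iterate_succ_apply' (epsOp N) (k-1) φ]
      simp only [Nat.succ_eq_add_one, hk1, Nat.add_sub_cancel]
      push_cast
      match_scalars <;> ring

lemma deltaOp_eq_zero_of_Y0 {φ : S N} (hφ : φ.IsWeightedHomogeneous (wY N) 0) :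
    deltaOp N φ = 0 := by
  unfold deltaOp
  apply Finset.sum_eq_zero
  intro i _
  rw [pderiv_inl_eq_zero hφ i, mul_zero]

lemma epsOp_iter_zero (k : ℕ) : (epsOp N)^[k] (0 : S N) = 0 := by
  induction k with
  | zero => rfl
  | succ k ih => rw [Function.iterate_succ_apply', ih]; simp [epsOp]

theorem statement5' (N : ℕ) (m n : ℕ) (hm : 1 ≤ m) (hmn : m ≤ n)
    (B : S N) (hB : Bihom N (m - 1) (n + 1) B) :
    ∃ A : S N, Bihom N m n A ∧ deltaOp N A = B := by
  have key : ∀ j : ℕ, j ≤ m - 1 → ∃ A : S N, Bihom N m n A ∧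
      deltaOp N A = (epsOp N)^[m-1-j] ((deltaOp N)^[m-1-j] B) := by
    intro j
    induction j with
    | zero =>
      intro _
      have hCb : Bihom N 0 (n + m) ((deltaOp N)^[m-1] B) := by
        have h := bihom_delta_iter (k := m-1) le_rfl hB
        have e1 : m - 1 - (m - 1) = 0 := by omega
        have e2 : n + 1 + (m - 1) = n + m := by omega
        rwa [e1, e2] at h
      set C := (deltaOp N)^[m-1] B with hC
      have hδC : deltaOp N C = 0 := deltaOp_eq_zero_of_Y0 hCb.1
      have hcp := comm_pow (a := 0) (b := n + m) m (by omega) hCb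
      rw [hδC, epsOp_iter_zero, zero_add] at hcp
      have hcp' : deltaOp N ((epsOp N)^[m] C)
          = ((m * (n + 1) : ℕ) : ℂ) • (epsOp N)^[m-1] C := by
        rw [hcp]
        congr 1
        push_cast
        ring
      have hne : ((m * (n + 1) : ℕ) : ℂ) ≠ 0 :=
        Nat.cast_ne_zero.mpr (Nat.mul_ne_zero (by omega) (by omega))
      refine ⟨((m * (n + 1) : ℕ) : ℂ)⁻¹ • (epsOp N)^[m] C, ?_, ?_⟩
      · apply Bihom.smul
        have h := bihom_eps_iter (k := m) (by omega) hCb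
        have e1 : 0 + m = m := by omega
        have e2 : n + m - m = n := by omega
        rwa [e1, e2] at h
      · rw [deltaOp_smul, hcp', smul_smul, inv_mul_cancel₀ hne, one_smul, Nat.sub_zero]
    | succ j ih =>
      intro hj1
      obtain ⟨A', hA', hdA'⟩ := ih (by omega)
      set k := m - 1 - j with hk
      have hk1 : 1 ≤ k := by omega
      have hkm : k ≤ m - 1 := by omega
      have hCb : Bihom N (m - k) (n + k) ((deltaOp N)^[k-1] B) := by
        have h := bihom_delta_iter (k := k-1) (by omega) hB
        have e1 : m - 1 - (k - 1) = m - k := by omega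
        have e2 : n + 1 + (k - 1) = n + k := by omega
        rwa [e1, e2] at h
      set C := (deltaOp N)^[k-1] B with hC
      have hδC : deltaOp N C = (deltaOp N)^[k] B := by
        rw [hC, ← Function.iterate_succ_apply' (deltaOp N) (k-1) B]
        congr 1
        omega
      have hcp := comm_pow (a := m - k) (b := n + k) k (by omega) hCb
      rw [hδC] at hcp
      have hek : (epsOp N)^[k] ((deltaOp N)^[k] B) = deltaOp N A' := by
        rw [hdA']
      rw [hek] at hcp
      have hcp' : deltaOp N ((epsOp N)^[k] C)
          = deltaOp N A' + ((k * (n - m + k + 1) : ℕ) : ℂ) • (epsOp N)^[k-1] C := by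
        rw [hcp]
        congr 2
        push_cast [Nat.cast_sub (show k ≤ m by omega), Nat.cast_sub hmn]
        ring
      have hne : ((k * (n - m + k + 1) : ℕ) : ℂ) ≠ 0 :=
        Nat.cast_ne_zero.mpr (Nat.mul_ne_zero (by omega) (by omega))
      refine ⟨((k * (n - m + k + 1) : ℕ) : ℂ)⁻¹ • ((epsOp N)^[k] C - A'), ?_, ?_⟩
      · apply Bihom.smul
        apply Bihom.sub _ hA'
        have h := bihom_eps_iter (k := k) (by omega) hCb
        have e1 : m - k + k = m := by omega
        have e2 : n + k - k = n := by omega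
        rwa [e1, e2] at h
      · rw [deltaOp_smul, deltaOp_sub, hcp', add_sub_cancel_left, smul_smul,
          inv_mul_cancel₀ hne, one_smul]
        have e3 : m - 1 - (j + 1) = k - 1 := by omega
        rw [e3, hC]
  obtain ⟨A, hA, hdA⟩ := key (m-1) le_rfl
  refine ⟨A, hA, ?_⟩
  rwa [Nat.sub_self, Function.iterate_zero, Function.iterate_zero, id_eq, id_eq] at hdA

/-- For `n ≥ m ≥ 1`, every bihomogeneous `B` of bidegree `(m−1, n+1)` is
`δ(A)` for some bihomogeneous `A` of bidegree `(m, n)`. -/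
theorem statement5 (N : ℕ) (hN : 2 ≤ N) (m n : ℕ) (hm : 1 ≤ m) (hmn : m ≤ n)
    (B : S N) (hB : Bihom N (m - 1) (n + 1) B) :
    ∃ A : S N, Bihom N m n A ∧ deltaOp N A = B :=
  statement5' N m n hm hmn B hB
end
end

section
/- Let m, n ∈ ℕ with 0 ≤ n < m. If A ∈ S is bihomogeneous of bidegree (m,n) and δ(A) = 0, then A = 0. -/
open MvPolynomial

noncomputable section

/-! ### Auxiliary operators -/

/-- The raising operator `F(A) = ∑ᵢ Yᵢ · ∂A/∂Xᵢ`. -/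
def Fop (N : ℕ) (A : S N) : S N :=
  ∑ i : Fin (N + 1), X (Sum.inl i) * pderiv (Sum.inr i) A

/-- The Euler operator in the `X`-variables. -/
def EXop (N : ℕ) (A : S N) : S N :=
  ∑ i : Fin (N + 1), X (Sum.inr i) * pderiv (Sum.inr i) A

/-- The Euler operator in the `Y`-variables. -/
def EYop (N : ℕ) (A : S N) : S N :=
  ∑ i : Fin (N + 1), X (Sum.inl i) * pderiv (Sum.inl i) A

/-! ### Generic lemmas -/

lemma X_mul_pderiv_monomial_s6 {σ : Type*} [DecidableEq σ] {μ : σ →₀ ℕ} {c : ℂ} {i : σ} :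
    X i * pderiv i (monomial μ c) = (μ i) • monomial μ c := by
  rw [pderiv_monomial]
  by_cases h : μ i = 0
  · simp [h]
  · rw [X, monomial_mul, one_mul]
    have hrec : Finsupp.single i 1 + (μ - Finsupp.single i 1) = μ := by
      ext j
      rcases eq_or_ne j i with rfl | hj
      · simp [Finsupp.single_apply]; omega
      · simp [Finsupp.single_apply, hj.symm]
    rw [hrec, smul_monomial]
    congr 1
    rw [nsmul_eq_mul, mul_comm]

/-- Euler's identity for weighted homogeneous polynomials. -/
lemma euler_gen {σ : Type*} [Fintype σ] [DecidableEq σ] (w : σ → ℕ) {d : ℕ}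
    {A : MvPolynomial σ ℂ} (hA : A.IsWeightedHomogeneous w d) :
    ∑ i : σ, w i • (X i * pderiv i A) = d • A := by
  calc ∑ i : σ, w i • (X i * pderiv i A)
      = ∑ μ ∈ A.support, ∑ i : σ, w i • (X i * pderiv i (monomial μ (A.coeff μ))) := by
        rw [Finset.sum_comm]
        refine Finset.sum_congr rfl fun i _ => ?_
        conv_lhs => rw [A.as_sum]
        rw [map_sum, Finset.mul_sum, Finset.smul_sum]
    _ = ∑ μ ∈ A.support, d • monomial μ (A.coeff μ) := by
        refine Finset.sum_congr rfl fun μ hμ => ?_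
        have hw : (Finsupp.weight w) μ = d := hA (mem_support_iff.mp hμ)
        calc ∑ i : σ, w i • (X i * pderiv i (monomial μ (A.coeff μ)))
            = ∑ i : σ, (w i * μ i) • monomial μ (A.coeff μ) := by
              refine Finset.sum_congr rfl fun i _ => ?_
              rw [_root_.X_mul_pderiv_monomial_s6, smul_smul]
          _ = d • monomial μ (A.coeff μ) := by
              rw [← Finset.sum_smul]
              congr 1
              rw [← hw, Finsupp.weight_apply, Finsupp.sum_fintype]
              · exact Finset.sum_congr rfl fun i _ => by rw [smul_eq_mul, mul_comm]
              · intro; simp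
    _ = d • A := by rw [← Finset.smul_sum, ← A.as_sum]

lemma pderiv_pderiv_comm' {σ : Type*} [DecidableEq σ] (i j : σ) (A : MvPolynomial σ ℂ) :
    pderiv i (pderiv j A) = pderiv j (pderiv i A) := by
  rcases eq_or_ne i j with rfl | hij
  · rfl
  · conv_lhs => rw [A.as_sum]
    conv_rhs => rw [A.as_sum]
    rw [map_sum, map_sum, map_sum, map_sum]
    refine Finset.sum_congr rfl fun μ _ => ?_
    simp only [pderiv_monomial]
    rw [Finsupp.tsub_apply, Finsupp.tsub_apply, Finsupp.single_apply, Finsupp.single_apply,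
      if_neg (Ne.symm hij), if_neg hij]
    congr 1
    · rw [tsub_tsub, tsub_tsub, add_comm]
    · simp only [Nat.sub_zero]; ring

lemma isWH_pderiv_s6 {σ : Type*} [DecidableEq σ] {w : σ → ℕ} {d : ℕ} {A : MvPolynomial σ ℂ}
    (h : A.IsWeightedHomogeneous w d) (i : σ) :
    (pderiv i A).IsWeightedHomogeneous w (d - w i) := by
  have hrw : pderiv i A = ∑ μ ∈ A.support,
      monomial (μ - Finsupp.single i 1) (A.coeff μ * μ i) := by
    conv_lhs => rw [A.as_sum]
    rw [map_sum]; simp only [pderiv_monomial]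
  rw [hrw, ← mem_weightedHomogeneousSubmodule]
  refine Submodule.sum_mem _ fun μ hμ => ?_
  by_cases h0 : μ i = 0
  · simp only [h0, Nat.cast_zero, mul_zero, map_zero]
    exact Submodule.zero_mem _
  · rw [mem_weightedHomogeneousSubmodule]
    apply isWeightedHomogeneous_monomial
    have hwμ : (Finsupp.weight w) μ = d := h (mem_support_iff.mp hμ)
    have hsplit : μ = (μ - Finsupp.single i 1) + Finsupp.single i 1 := by
      ext j
      rcases eq_or_ne j i with rfl | hj
      · simp [Finsupp.single_apply]; omega
      · simp [Finsupp.single_apply, hj.symm]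
    have hws : (Finsupp.weight w) (Finsupp.single i 1) = w i := by
      rw [Finsupp.weight_apply, Finsupp.sum_single_index] <;> simp
    rw [hsplit, map_add, hws] at hwμ
    omega

/-! ### Properties of the operators -/

lemma Fop_bihom {N m n : ℕ} {A : S N} (hA : Bihom N m n A) :
    Bihom N (m + 1) (n - 1) (Fop N A) := by
  constructor
  · rw [← mem_weightedHomogeneousSubmodule]
    refine Submodule.sum_mem _ fun i _ => ?_
    rw [mem_weightedHomogeneousSubmodule]
    have h1 := (isWeightedHomogeneous_X ℂ (wY N) (Sum.inl i)).mul (isWH_pderiv_s6 hA.1 (Sum.inr i))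
    have h2 : wY N (Sum.inl i) + (m - wY N (Sum.inr i)) = m + 1 := by simp [wY]; omega
    rwa [h2] at h1
  · rw [← mem_weightedHomogeneousSubmodule]
    refine Submodule.sum_mem _ fun i _ => ?_
    rw [mem_weightedHomogeneousSubmodule]
    have h1 := (isWeightedHomogeneous_X ℂ (wX N) (Sum.inl i)).mul (isWH_pderiv_s6 hA.2 (Sum.inr i))
    have h2 : wX N (Sum.inl i) + (n - wX N (Sum.inr i)) = n - 1 := by simp [wX]
    rwa [h2] at h1

lemma pderiv_inr_zero {N : ℕ} {A : S N} (h : A.IsWeightedHomogeneous (wX N) 0)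
    (j : Fin (N + 1)) : pderiv (Sum.inr j) A = 0 := by
  conv_lhs => rw [A.as_sum]
  rw [map_sum]
  refine Finset.sum_eq_zero fun μ hμ => ?_
  rw [pderiv_monomial]
  have hwμ : (Finsupp.weight (wX N)) μ = 0 := h (mem_support_iff.mp hμ)
  have h0 : μ (Sum.inr j) = 0 := by
    rw [Finsupp.weight_apply, Finsupp.sum, Finset.sum_eq_zero_iff] at hwμ
    by_cases hmem : Sum.inr j ∈ μ.support
    · simpa [wX] using hwμ _ hmem
    · exact Finsupp.notMem_support_iff.mp hmem
  simp [h0]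

lemma Fop_smul (N : ℕ) (c : ℂ) (A : S N) : Fop N (c • A) = c • Fop N A := by
  unfold Fop
  simp only [smul_eq_C_mul, Finset.mul_sum, pderiv_C_mul]
  exact Finset.sum_congr rfl fun i _ => by ring

lemma Fop_zero (N : ℕ) : Fop N 0 = 0 := by simp [Fop]

lemma deltaOp_zero (N : ℕ) : deltaOp N 0 = 0 := by simp [deltaOp]

lemma EXop_eq {N n : ℕ} {A : S N} (h : A.IsWeightedHomogeneous (wX N) n) :
    EXop N A = n • A := by
  have h1 := euler_gen (wX N) h
  rw [Fintype.sum_sum_type] at h1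
  simpa [wX, EXop] using h1

lemma EYop_eq {N m : ℕ} {A : S N} (h : A.IsWeightedHomogeneous (wY N) m) :
    EYop N A = m • A := by
  have h1 := euler_gen (wY N) h
  rw [Fintype.sum_sum_type] at h1
  simpa [wY, EYop] using h1

/-- The commutator identity `δ∘F = F∘δ + E_X - E_Y`. -/
lemma delta_Fop (N : ℕ) (A : S N) :
    deltaOp N (Fop N A) + EYop N A = Fop N (deltaOp N A) + EXop N A := by
  have e1 : deltaOp N (Fop N A) = EXop N A +
      ∑ i : Fin (N + 1), ∑ j : Fin (N + 1),
        X (Sum.inr i) * X (Sum.inl j) * pderiv (Sum.inl i) (pderiv (Sum.inr j) A) := by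
    calc deltaOp N (Fop N A)
        = ∑ i : Fin (N + 1), ∑ j : Fin (N + 1),
            (X (Sum.inr i) * (pderiv (Sum.inl i) (X (Sum.inl j)) * pderiv (Sum.inr j) A)
              + X (Sum.inr i) * X (Sum.inl j) * pderiv (Sum.inl i) (pderiv (Sum.inr j) A)) := by
          unfold deltaOp Fop
          refine Finset.sum_congr rfl fun i _ => ?_
          rw [map_sum, Finset.mul_sum]
          refine Finset.sum_congr rfl fun j _ => ?_
          rw [pderiv_mul, mul_add]; ring
      _ = _ := by
          simp only [Finset.sum_add_distrib]
          congr 1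
          unfold EXop
          refine Finset.sum_congr rfl fun i _ => ?_
          rw [Finset.sum_eq_single i]
          · rw [pderiv_X_self, one_mul]
          · intro j _ hj
            rw [pderiv_X_of_ne (fun h => hj (Sum.inl.inj h)), zero_mul, mul_zero]
          · intro h; exact absurd (Finset.mem_univ i) h
  have e2 : Fop N (deltaOp N A) = EYop N A +
      ∑ i : Fin (N + 1), ∑ j : Fin (N + 1),
        X (Sum.inl i) * X (Sum.inr j) * pderiv (Sum.inr i) (pderiv (Sum.inl j) A) := by
    calc Fop N (deltaOp N A)
        = ∑ i : Fin (N + 1), ∑ j : Fin (N + 1),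
            (X (Sum.inl i) * (pderiv (Sum.inr i) (X (Sum.inr j)) * pderiv (Sum.inl j) A)
              + X (Sum.inl i) * X (Sum.inr j) * pderiv (Sum.inr i) (pderiv (Sum.inl j) A)) := by
          unfold deltaOp Fop
          refine Finset.sum_congr rfl fun i _ => ?_
          rw [map_sum, Finset.mul_sum]
          refine Finset.sum_congr rfl fun j _ => ?_
          rw [pderiv_mul, mul_add]; ring
      _ = _ := by
          simp only [Finset.sum_add_distrib]
          congr 1
          unfold EYop
          refine Finset.sum_congr rfl fun i _ => ?_
          rw [Finset.sum_eq_single i]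
          · rw [pderiv_X_self, one_mul]
          · intro j _ hj
            rw [pderiv_X_of_ne (fun h => hj (Sum.inr.inj h)), zero_mul, mul_zero]
          · intro h; exact absurd (Finset.mem_univ i) h
  have e3 : ∑ i : Fin (N + 1), ∑ j : Fin (N + 1),
        X (Sum.inr i) * X (Sum.inl j) * pderiv (Sum.inl i) (pderiv (Sum.inr j) A)
      = ∑ i : Fin (N + 1), ∑ j : Fin (N + 1),
        X (Sum.inl i) * X (Sum.inr j) * pderiv (Sum.inr i) (pderiv (Sum.inl j) A) := by
    rw [Finset.sum_comm]
    refine Finset.sum_congr rfl fun i _ => Finset.sum_congr rfl fun j _ => ?_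
    rw [pderiv_pderiv_comm']
    ring
  rw [e1, e2, e3]; ring

/-- For `0 ≤ n < m`, a bihomogeneous `A` of bidegree `(m, n)` with
`δ(A) = 0` vanishes. -/
theorem statement6 (N : ℕ) (hN : 2 ≤ N) (m n : ℕ) (hnm : n < m)
    (A : S N) (hA : Bihom N m n A) (hdel : deltaOp N A = 0) :
    A = 0 := by
  obtain ⟨e, rfl⟩ : ∃ e, m = n + 1 + e := ⟨m - n - 1, by omega⟩
  obtain ⟨hY, hX⟩ := hA
  set B : ℕ → S N := fun k => (Fop N)^[k] A with hB
  have hB0 : B 0 = A := rfl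
  have hBs : ∀ k, B (k + 1) = Fop N (B k) := fun k => Function.iterate_succ_apply' _ _ _
  -- the bidegrees of the iterates
  have hbihom : ∀ k, k ≤ n → Bihom N (n + 1 + e + k) (n - k) (B k) := by
    intro k
    induction k with
    | zero => intro _; exact ⟨hY, hX⟩
    | succ k ih =>
      intro hk
      rw [hBs k]
      exact Fop_bihom (ih (by omega))
  -- the key sl₂ recursion
  have hdel' : ∀ k, k ≤ n →
      deltaOp N (B (k + 1)) = (-((((k + 1) * (e + k + 1)) : ℕ) : ℂ)) • B k := by
    intro k
    induction k with
    | zero =>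
      intro _
      have hc := delta_Fop N (B 0)
      rw [hB0, hdel, EXop_eq hX, EYop_eq hY] at hc
      have hD := eq_sub_of_add_eq hc
      rw [hBs 0, hB0, hD, Fop_zero, zero_add]
      rw [← Nat.cast_smul_eq_nsmul ℂ, ← Nat.cast_smul_eq_nsmul ℂ, ← sub_smul]
      congr 1
      push_cast
      ring
    | succ k ih =>
      intro hk
      have ihh := ih (by omega)
      have hc := delta_Fop N (B (k + 1))
      rw [EXop_eq (hbihom (k + 1) hk).2, EYop_eq (hbihom (k + 1) hk).1, ihh,
        Fop_smul, ← hBs k] at hc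
      have hD := eq_sub_of_add_eq hc
      rw [hBs (k + 1), hD, ← Nat.cast_smul_eq_nsmul ℂ, ← Nat.cast_smul_eq_nsmul ℂ,
        ← add_smul, ← sub_smul]
      congr 1
      push_cast [Nat.cast_sub (show k + 1 ≤ n by omega)]
      ring
  -- the top iterate vanishes
  have hBn1 : B (n + 1) = 0 := by
    have h0 : (B n).IsWeightedHomogeneous (wX N) 0 := by
      have := (hbihom n le_rfl).2
      rwa [Nat.sub_self] at this
    rw [hBs n]
    exact Finset.sum_eq_zero fun i _ => by rw [pderiv_inr_zero h0 i, mul_zero]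
  -- descend
  have hdown : ∀ j, j ≤ n + 1 → B (n + 1 - j) = 0 := by
    intro j
    induction j with
    | zero => intro _; simpa using hBn1
    | succ j ih =>
      intro hj
      have hprev : B (n + 1 - j) = 0 := ih (by omega)
      have hk : n + 1 - j = (n - j) + 1 := by omega
      have hd := hdel' (n - j) (by omega)
      rw [hk] at hprev
      rw [hprev, deltaOp_zero] at hd
      have hc : ((((n - j + 1) * (e + (n - j) + 1)) : ℕ) : ℂ) ≠ 0 := by
        rw [Nat.cast_ne_zero]
        exact Nat.mul_ne_zero (by omega) (by omega)
      have hz := (smul_eq_zero.mp hd.symm).resolve_left (neg_ne_zero.mpr hc)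
      have hidx : n + 1 - (j + 1) = n - j := by omega
      rw [hidx]
      exact hz
  have := hdown (n + 1) le_rfl
  simpa [hB0] using this
end
end

section
/- Let d ≥ 1 and let P ∈ S be a polynomial in the X-variables only, homogeneous of degree d. Let P^Y ∈ S denote the polynomial obtained from P by substituting Yᵢ for Xᵢ for every 0 ≤ i ≤ N. Then δ^{d−1}(P^Y) = (d−1)! · (∇P·Y). -/
open MvPolynomial

noncomputable section

namespace Statement9Aux

variable {σ : Type*} [DecidableEq σ]

lemma pderiv_comm' (i j : σ) (p : MvPolynomial σ ℂ) :
    pderiv i (pderiv j p) = pderiv j (pderiv i p) := by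
  rcases eq_or_ne i j with rfl | hij
  · rfl
  conv_lhs => rw [p.as_sum]
  conv_rhs => rw [p.as_sum]
  rw [map_sum, map_sum, map_sum, map_sum]
  refine Finset.sum_congr rfl fun m _ => ?_
  simp only [pderiv_monomial]
  have h1 : (m - (Finsupp.single j 1 : σ →₀ ℕ)) i = m i := by
    rw [Finsupp.tsub_apply, Finsupp.single_eq_of_ne' (fun h => hij h.symm), Nat.sub_zero]
  have h2 : (m - (Finsupp.single i 1 : σ →₀ ℕ)) j = m j := by
    rw [Finsupp.tsub_apply, Finsupp.single_eq_of_ne' hij, Nat.sub_zero]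
  rw [h1, h2, tsub_right_comm]
  ring_nf

lemma euler [Fintype σ] {n : ℕ} {Q : MvPolynomial σ ℂ} (h : Q.IsHomogeneous n) :
    ∑ i : σ, X i * pderiv i Q = (n : MvPolynomial σ ℂ) * Q := by
  have main : ∀ m ∈ Q.support,
      ∑ i : σ, X i * pderiv i (monomial m (coeff m Q)) =
        (n : MvPolynomial σ ℂ) * monomial m (coeff m Q) := by
    intro m hm
    set c := coeff m Q with hc
    have hdeg : m.degree = n := by
      rw [Finsupp.degree_eq_weight_one]
      exact h (MvPolynomial.mem_support_iff.mp hm)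
    have key : ∀ i : σ, X i * pderiv i (monomial m c) = monomial m (c * (m i : ℂ)) := by
      intro i
      rw [pderiv_monomial, X, monomial_mul, one_mul]
      rcases eq_or_ne (m i) 0 with h0 | h0
      · rw [h0]; simp
      · congr 1
        rw [add_comm, tsub_add_cancel_of_le]
        exact Finsupp.single_le_iff.mpr (Nat.one_le_iff_ne_zero.mpr h0)
    rw [Finset.sum_congr rfl (fun i _ => key i), ← map_sum (monomial m), ← Finset.mul_sum]
    have hsum : (∑ i : σ, (m i : ℂ)) = (n : ℂ) := by
      rw [← hdeg, Finsupp.degree_apply]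
      rw [Finset.sum_subset (Finset.subset_univ m.support)
        (fun x _ hx => by simpa using Finsupp.notMem_support_iff.mp hx)]
      push_cast; ring
    rw [hsum, ← map_natCast (C : ℂ →+* MvPolynomial σ ℂ) n, C_mul_monomial, mul_comm]
  calc ∑ i : σ, X i * pderiv i Q
      = ∑ i : σ, X i * pderiv i (∑ m ∈ Q.support, monomial m (coeff m Q)) := by
        rw [← Q.as_sum]
    _ = ∑ m ∈ Q.support, ∑ i : σ, X i * pderiv i (monomial m (coeff m Q)) := by
        simp_rw [map_sum, Finset.mul_sum]; rw [Finset.sum_comm]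
    _ = ∑ m ∈ Q.support, (n : MvPolynomial σ ℂ) * monomial m (coeff m Q) :=
        Finset.sum_congr rfl main
    _ = (n : MvPolynomial σ ℂ) * Q := by rw [← Finset.mul_sum, ← Q.as_sum]

lemma pderiv_isHomogeneous {n : ℕ} {Q : MvPolynomial σ ℂ} (h : Q.IsHomogeneous n) (i : σ) :
    (pderiv i Q).IsHomogeneous (n - 1) := by
  conv_lhs => rw [Q.as_sum]
  rw [map_sum]
  apply MvPolynomial.IsHomogeneous.sum
  intro m hm
  rw [pderiv_monomial]
  rcases eq_or_ne (m i) 0 with h0 | h0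
  · rw [h0]; simpa using isHomogeneous_zero σ ℂ (n - 1)
  · apply isHomogeneous_monomial
    have hdeg : m.degree = n := by
      rw [Finsupp.degree_eq_weight_one]
      exact h (MvPolynomial.mem_support_iff.mp hm)
    have hle : Finsupp.single i 1 ≤ m :=
      Finsupp.single_le_iff.mpr (Nat.one_le_iff_ne_zero.mpr h0)
    have hadd : (m - Finsupp.single i 1) + Finsupp.single i 1 = m := tsub_add_cancel_of_le hle
    have hdeg2 : (m - Finsupp.single i 1).degree + (Finsupp.single i 1).degree = n := by
      simp only [Finsupp.degree_eq_weight_one] at hdeg ⊢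
      rw [← map_add, hadd, hdeg]
    have hone : (Finsupp.single i 1).degree = 1 := by
      simp [Finsupp.degree_apply, Finsupp.support_single_ne_zero i one_ne_zero]
    omega

lemma homog_zero_eq_C {p : MvPolynomial σ ℂ} (h : p.IsHomogeneous 0) :
    p = C (coeff 0 p) := by
  ext m
  rcases eq_or_ne m 0 with rfl | hm
  · simp
  · rw [coeff_C, if_neg (fun hc => hm hc.symm)]
    by_contra hc
    exact hm (Finsupp.degree_eq_zero_iff m |>.mp
      (by rw [Finsupp.degree_eq_weight_one]; exact h hc))

lemma rename_eq_of_homog_zero {τ : Type*} {p : MvPolynomial σ ℂ} (h : p.IsHomogeneous 0)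
    (f g : σ → τ) : rename f p = rename g p := by
  rw [homog_zero_eq_C h, rename_C, rename_C]

variable (N : ℕ)

lemma deltaOp_add (A B : S N) : deltaOp N (A + B) = deltaOp N A + deltaOp N B := by
  simp [deltaOp, mul_add, Finset.sum_add_distrib]

lemma deltaOp_sum {ι : Type*} (s : Finset ι) (f : ι → S N) :
    deltaOp N (∑ i ∈ s, f i) = ∑ i ∈ s, deltaOp N (f i) := by
  classical
  induction s using Finset.induction with
  | empty => simp [deltaOp]
  | insert _ _ h ih => rw [Finset.sum_insert h, Finset.sum_insert h, deltaOp_add, ih]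

lemma deltaOp_iterate_sum {ι : Type*} (n : ℕ) (s : Finset ι) (f : ι → S N) :
    (deltaOp N)^[n] (∑ i ∈ s, f i) = ∑ i ∈ s, (deltaOp N)^[n] (f i) := by
  induction n generalizing f with
  | zero => simp
  | succ n ih =>
    rw [Function.iterate_succ_apply, deltaOp_sum]
    rw [ih (fun i => deltaOp N (f i))]
    simp [Function.iterate_succ_apply]

lemma deltaOp_X_mul (k : Fin (N + 1)) (A : S N) :
    deltaOp N (X (Sum.inr k) * A) = X (Sum.inr k) * deltaOp N A := by
  unfold deltaOp
  rw [Finset.mul_sum]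
  refine Finset.sum_congr rfl fun i _ => ?_
  rw [pderiv_mul, pderiv_X_of_ne (by simp), zero_mul, zero_add]
  ring

lemma deltaOp_iterate_X_mul (k : Fin (N + 1)) (n : ℕ) (A : S N) :
    (deltaOp N)^[n] (X (Sum.inr k) * A) = X (Sum.inr k) * (deltaOp N)^[n] A := by
  induction n generalizing A with
  | zero => simp
  | succ n ih => rw [Function.iterate_succ_apply, deltaOp_X_mul, ih,
      Function.iterate_succ_apply]

lemma key (d : ℕ) (hd : 1 ≤ d) :
    ∀ Q : MvPolynomial (Fin (N + 1)) ℂ, Q.IsHomogeneous d →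
    (deltaOp N)^[d - 1] (rename Sum.inl Q) =
      (Nat.factorial (d - 1) : S N) *
        ∑ j : Fin (N + 1), X (Sum.inl j) * rename Sum.inr (pderiv j Q) := by
  induction d, hd using Nat.le_induction with
  | base =>
    intro Q hQ
    have heuler := euler hQ
    rw [Nat.cast_one, one_mul] at heuler
    simp only [Nat.sub_self, Function.iterate_zero, id_eq, Nat.factorial_zero, Nat.cast_one,
      one_mul]
    conv_lhs => rw [← heuler]
    rw [map_sum]
    refine Finset.sum_congr rfl fun j _ => ?_
    rw [map_mul, rename_X]
    congr 1
    exact rename_eq_of_homog_zero (by simpa using pderiv_isHomogeneous hQ j) _ _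
  | succ d hd ih =>
    intro Q hQ
    have hstep : deltaOp N (rename Sum.inl Q) =
        ∑ i : Fin (N + 1), X (Sum.inr i) * rename Sum.inl (pderiv i Q) := by
      unfold deltaOp
      refine Finset.sum_congr rfl fun i _ => ?_
      rw [pderiv_rename Sum.inl_injective]
    have hpred : d + 1 - 1 = (d - 1) + 1 := by omega
    rw [hpred, Function.iterate_succ_apply, hstep, deltaOp_iterate_sum]
    have hterm : ∀ i : Fin (N + 1),
        (deltaOp N)^[d - 1] (X (Sum.inr i) * rename Sum.inl (pderiv i Q)) =
          (Nat.factorial (d - 1) : S N) * ∑ j : Fin (N + 1),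
            X (Sum.inr i) * (X (Sum.inl j) * rename Sum.inr (pderiv j (pderiv i Q))) := by
      intro i
      rw [deltaOp_iterate_X_mul, ih (pderiv i Q)
        (by simpa using pderiv_isHomogeneous hQ i)]
      rw [mul_left_comm, Finset.mul_sum]
    rw [Finset.sum_congr rfl fun i _ => hterm i]
    have hswap : ∑ i : Fin (N + 1), (Nat.factorial (d - 1) : S N) * ∑ j : Fin (N + 1),
          X (Sum.inr i) * (X (Sum.inl j) * rename Sum.inr (pderiv j (pderiv i Q))) =
        (Nat.factorial (d - 1) : S N) * ∑ j : Fin (N + 1), X (Sum.inl j) *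
          ∑ i : Fin (N + 1), X (Sum.inr i) * rename Sum.inr (pderiv i (pderiv j Q)) := by
      rw [← Finset.mul_sum, Finset.sum_comm]
      congr 1
      refine Finset.sum_congr rfl fun j _ => ?_
      rw [Finset.mul_sum]
      refine Finset.sum_congr rfl fun i _ => ?_
      rw [pderiv_comm' i j]
      ring
    rw [hswap]
    have hinner : ∀ j : Fin (N + 1),
        ∑ i : Fin (N + 1), X (Sum.inr i) * rename Sum.inr (pderiv i (pderiv j Q)) =
          ((d : ℂ) • (1 : S N)) * rename Sum.inr (pderiv j Q) := by
      intro j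
      have hpd : (pderiv j Q).IsHomogeneous d := by
        simpa using pderiv_isHomogeneous hQ j
      calc ∑ i : Fin (N + 1), X (Sum.inr i) * rename Sum.inr (pderiv i (pderiv j Q))
          = ∑ i : Fin (N + 1), rename (Sum.inr : Fin (N + 1) → Fin (N + 1) ⊕ Fin (N + 1))
              (X i * pderiv i (pderiv j Q)) := by
            refine Finset.sum_congr rfl fun i _ => ?_
            rw [map_mul, rename_X]
        _ = rename Sum.inr ((d : MvPolynomial (Fin (N + 1)) ℂ) * pderiv j Q) := by
            rw [← map_sum, euler hpd]
        _ = ((d : ℂ) • (1 : S N)) * rename Sum.inr (pderiv j Q) := by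
            rw [map_mul, map_natCast]
            simp [Algebra.smul_def]
    rw [Finset.sum_congr rfl fun j _ => by rw [hinner j]]
    have : ∑ j : Fin (N + 1), X (Sum.inl j) *
          (((d : ℂ) • (1 : S N)) * rename Sum.inr (pderiv j Q)) =
        ((d : S N)) * ∑ j : Fin (N + 1), X (Sum.inl j) * rename Sum.inr (pderiv j Q) := by
      rw [Finset.mul_sum]
      refine Finset.sum_congr rfl fun j _ => ?_
      have : ((d : ℂ) • (1 : S N)) = (d : S N) := by
        simp [Algebra.smul_def]
      rw [this]; ring
    rw [this, ← mul_assoc]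
    congr 1
    have h2 : d - 1 + 1 = d := by omega
    rw [Nat.factorial_succ, h2]
    push_cast
    ring

end Statement9Aux

/-- For `P` homogeneous of degree `d ≥ 1` in the `X`-variables only,
`δ^{d−1}(P(Y)) = (d−1)! · ∑ᵢ Yᵢ·∂P/∂Xᵢ`, where `P(Y)` is obtained from `P` by
substituting `Yᵢ` for `Xᵢ`. -/
theorem statement9 (N : ℕ) (hN : 2 ≤ N) (d : ℕ) (hd : 1 ≤ d)
    (P : S N)
    (hPsupp : P ∈ MvPolynomial.supported ℂ
      (Set.range (Sum.inr : Fin (N + 1) → Fin (N + 1) ⊕ Fin (N + 1))))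
    (hPhom : P.IsWeightedHomogeneous (wX N) d) :
    (deltaOp N)^[d - 1]
        (aeval (Sum.elim (fun i => (X (Sum.inl i) : S N)) (fun i => (X (Sum.inl i) : S N))) P) =
      (Nat.factorial (d - 1) : S N) *
        ∑ i : Fin (N + 1), X (Sum.inl i) * pderiv (Sum.inr i) P := by
  obtain ⟨Q, rfl⟩ := exists_rename_eq_of_vars_subset_range P Sum.inr Sum.inr_injective
    (by simpa using (MvPolynomial.mem_supported).mp hPsupp)
  have hQ : Q.IsHomogeneous d := by
    intro m hm
    have hco : coeff (Finsupp.mapDomain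
        (Sum.inr : Fin (N + 1) → Fin (N + 1) ⊕ Fin (N + 1)) m) (rename Sum.inr Q) ≠ 0 := by
      rwa [coeff_rename_mapDomain _ Sum.inr_injective]
    have hw := hPhom hco
    rw [← hw, Finsupp.weight_apply, Finsupp.weight_apply,
      Finsupp.sum_mapDomain_index (fun a => by simp) (fun a b c => by rw [add_smul])]
    simp [wX]
  have hsub : aeval (Sum.elim (fun i => (X (Sum.inl i) : S N)) (fun i => (X (Sum.inl i) : S N)))
      (rename Sum.inr Q) = rename Sum.inl Q := by
    rw [aeval_rename]
    rw [rename_eq_aeval]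
    rfl
  rw [hsub, Statement9Aux.key N d hd Q hQ]
  congr 1
  refine Finset.sum_congr rfl fun i _ => ?_
  rw [pderiv_rename Sum.inr_injective]
end
end

section
/- Let d ≥ 1 and let P ∈ S be a polynomial in the X-variables only, homogeneous of degree d. Define maps α, β : S → S by α(A) := (∇P·Y)·A and β(A) := d·P·A − (∇P·Y)·δ(A). Then: (i) for every A ∈ S with δ(δ(A)) = 0 one has δ(β(A)) = 0; and (ii) for every A ∈ S with δ(A) = 0 one has β(α(A)) = 0. -/
open MvPolynomial

noncomputable section

lemma aux_pderiv_comm {σ : Type*} [DecidableEq σ] (i j : σ) (f : MvPolynomial σ ℂ) :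
    pderiv i (pderiv j f) = pderiv j (pderiv i f) := by
  induction f using MvPolynomial.induction_on' with
  | add p q hp hq => simp [map_add, hp, hq]
  | monomial m c =>
    by_cases h : i = j
    · subst h; rfl
    · simp only [pderiv_monomial]
      have h1 : ((m - Finsupp.single j 1 : σ →₀ ℕ)) i = m i := by
        rw [Finsupp.tsub_apply, Finsupp.single_apply, if_neg (by exact fun e => h e.symm)]
        rfl
      have h2 : ((m - Finsupp.single i 1 : σ →₀ ℕ)) j = m j := by
        rw [Finsupp.tsub_apply, Finsupp.single_apply, if_neg h]
        rfl
      rw [h1, h2, tsub_tsub, tsub_tsub, add_comm]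
      ring_nf

lemma aux_X_mul_pderiv_monomial {σ : Type*} [DecidableEq σ] (i : σ) (m : σ →₀ ℕ) (c : ℂ) :
    X i * pderiv i (monomial m c) = (m i) • monomial m c := by
  rw [pderiv_monomial]
  by_cases h : m i = 0
  · simp [h]
  · rw [X, monomial_mul, one_mul]
    have : Finsupp.single i 1 + (m - Finsupp.single i 1) = m := by
      rw [add_tsub_cancel_iff_le]
      · intro x
        simp only [Finsupp.single_apply]
        split
        · subst ‹i = x›; omega
        · simp
    rw [this]
    rw [← map_nsmul]
    congr 1
    rw [nsmul_eq_mul]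
    ring

lemma aux_deltaOp_mul (N : ℕ) (A B : S N) :
    deltaOp N (A * B) = deltaOp N A * B + A * deltaOp N B := by
  unfold deltaOp
  rw [Finset.sum_mul, Finset.mul_sum, ← Finset.sum_add_distrib]
  refine Finset.sum_congr rfl fun i _ => ?_
  rw [pderiv_mul]
  ring

lemma aux_euler (N d : ℕ) (P : S N) (hPhom : P.IsWeightedHomogeneous (wX N) d) :
    ∑ j : Fin (N + 1), X (Sum.inr j) * pderiv (Sum.inr j) P = (d : S N) * P := by
  conv_lhs => rw [P.as_sum]
  conv_rhs => rw [P.as_sum]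
  simp only [map_sum, Finset.mul_sum]
  rw [Finset.sum_comm]
  refine Finset.sum_congr rfl fun m hm => ?_
  have hw : (Finsupp.weight (wX N)) m = d := hPhom (mem_support_iff.mp hm)
  have hsum : ∑ j : Fin (N + 1), m (Sum.inr j) = d := by
    rw [← hw, Finsupp.weight_apply, Finsupp.sum_fintype _ _ (fun _ => by simp),
      Fintype.sum_sum_type]
    simp [wX]
  calc ∑ j : Fin (N + 1), X (Sum.inr j) * pderiv (Sum.inr j) (monomial m (coeff m P))
      = ∑ j : Fin (N + 1), (m (Sum.inr j)) • monomial m (coeff m P) := by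
        exact Finset.sum_congr rfl fun j _ => aux_X_mul_pderiv_monomial _ _ _
    _ = (∑ j : Fin (N + 1), m (Sum.inr j)) • monomial m (coeff m P) := by
        rw [Finset.sum_smul]
    _ = (d : S N) * monomial m (coeff m P) := by rw [hsum, nsmul_eq_mul]

lemma aux_deltaOp_sub (N : ℕ) (A B : S N) :
    deltaOp N (A - B) = deltaOp N A - deltaOp N B := by
  unfold deltaOp
  rw [← Finset.sum_sub_distrib]
  refine Finset.sum_congr rfl fun i _ => ?_
  rw [map_sub, mul_sub]

/-- For `P` homogeneous of degree `d ≥ 1` in the `X`-variables only, with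
`α(A) = (∇P·Y)·A` and `β(A) = d·P·A − (∇P·Y)·δ(A)`:
(i) `δ∘δ(A) = 0` implies `δ(β(A)) = 0`; (ii) `δ(A) = 0` implies `β(α(A)) = 0`. -/
theorem statement13 (N : ℕ) (hN : 2 ≤ N) (d : ℕ) (hd : 1 ≤ d)
    (P : S N)
    (hPsupp : P ∈ MvPolynomial.supported ℂ
      (Set.range (Sum.inr : Fin (N + 1) → Fin (N + 1) ⊕ Fin (N + 1))))
    (hPhom : P.IsWeightedHomogeneous (wX N) d)
    (gradPY : S N)
    (hgrad : gradPY = ∑ i : Fin (N + 1), X (Sum.inl i) * pderiv (Sum.inr i) P)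
    (α β : S N → S N)
    (hα : ∀ A, α A = gradPY * A)
    (hβ : ∀ A, β A = (d : S N) * P * A - gradPY * deltaOp N A) :
    (∀ A : S N, deltaOp N (deltaOp N A) = 0 → deltaOp N (β A) = 0) ∧
      (∀ A : S N, deltaOp N A = 0 → β (α A) = 0) := by
  have hPvars : ∀ i : Fin (N + 1), pderiv (Sum.inl i) P = 0 := by
    intro i
    apply pderiv_eq_zero_of_notMem_vars
    intro hmem
    obtain ⟨j, hj⟩ := (mem_supported.mp hPsupp) hmem
    exact Sum.inr_ne_inl hj
  have hδP : deltaOp N P = 0 := by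
    unfold deltaOp
    simp [hPvars]
  have hδd : deltaOp N ((d : ℕ) : S N) = 0 := by
    unfold deltaOp
    have : ((d : ℕ) : S N) = C ((d : ℕ) : ℂ) := (map_natCast C d).symm
    rw [this]
    simp [pderiv_C]
  have hgradderiv : ∀ j, pderiv (Sum.inl j) gradPY = pderiv (Sum.inr j) P := by
    intro j
    rw [hgrad, map_sum, Finset.sum_eq_single j]
    · rw [pderiv_mul, pderiv_X_self, one_mul, aux_pderiv_comm, hPvars, map_zero, mul_zero,
        add_zero]
    · intro i _ hij
      rw [pderiv_mul, pderiv_X_of_ne (by simpa using hij), zero_mul, zero_add,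
        aux_pderiv_comm, hPvars, map_zero, mul_zero]
    · simp
  have hδgrad : deltaOp N gradPY = (d : S N) * P := by
    have : deltaOp N gradPY = ∑ j : Fin (N + 1), X (Sum.inr j) * pderiv (Sum.inr j) P := by
      unfold deltaOp
      exact Finset.sum_congr rfl fun j _ => by rw [hgradderiv]
    rw [this, aux_euler N d P hPhom]
  constructor
  · intro A hA
    rw [hβ, aux_deltaOp_sub, aux_deltaOp_mul, aux_deltaOp_mul, aux_deltaOp_mul, hδgrad, hδP,
      hδd, hA]
    ring
  · intro A hA
    rw [hα, hβ, aux_deltaOp_mul, hδgrad, hA, mul_zero, add_zero]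
    ring
end
end

section
/- Let u : S → S be the ℂ-linear map determined on monomials by u(Y^a·X^b) = (1/a!)·Y^a·X^b, where for a multi-exponent a = (a₀,…,a_N) one sets a! := a₀!⋯a_N!. Then for every A ∈ S: u( q·A + ∑_{i=0}^{N} Xᵢ·Yᵢ²·(∂A/∂Yᵢ) ) = q·u(A). -/
open MvPolynomial

noncomputable section

private lemma Xmul {σ : Type} [DecidableEq σ] (e : σ →₀ ℕ) (a : σ) (c : ℂ) :
    X a * monomial e c = monomial (e + Finsupp.single a 1) c := by
  rw [X, monomial_mul, one_mul, add_comm]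

private lemma u_monomial (N : ℕ) (u : S N →ₗ[ℂ] S N)
    (hu : ∀ e : (Fin (N + 1) ⊕ Fin (N + 1)) →₀ ℕ,
      u (monomial e 1) =
        monomial e ((∏ i : Fin (N + 1), (Nat.factorial (e (Sum.inl i)) : ℂ))⁻¹))
    (e : (Fin (N + 1) ⊕ Fin (N + 1)) →₀ ℕ) (c : ℂ) :
    u (monomial e c) =
      monomial e (c * (∏ i : Fin (N + 1), (Nat.factorial (e (Sum.inl i)) : ℂ))⁻¹) := by
  have h : monomial e c = c • monomial e (1 : ℂ) := by
    rw [smul_monomial, smul_eq_mul, mul_one]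
  rw [h, map_smul, hu, smul_monomial, smul_eq_mul]

private lemma key (N : ℕ) (u : S N →ₗ[ℂ] S N)
    (hu : ∀ e : (Fin (N + 1) ⊕ Fin (N + 1)) →₀ ℕ,
      u (monomial e 1) =
        monomial e ((∏ i : Fin (N + 1), (Nat.factorial (e (Sum.inl i)) : ℂ))⁻¹))
    (i : Fin (N + 1)) (e : (Fin (N + 1) ⊕ Fin (N + 1)) →₀ ℕ) (c : ℂ) :
    u (X (Sum.inr i) * X (Sum.inl i) * monomial e c
        + X (Sum.inr i) * X (Sum.inl i) ^ 2 * pderiv (Sum.inl i) (monomial e c))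
      = X (Sum.inr i) * X (Sum.inl i) * u (monomial e c) := by
  have hfac : ∀ m : ℕ, ((Nat.factorial m : ℂ)) ≠ 0 := fun m => by
    exact_mod_cast Nat.cast_ne_zero.mpr (Nat.factorial_ne_zero m)
  set f : (Fin (N + 1) ⊕ Fin (N + 1)) →₀ ℕ :=
    e + Finsupp.single (Sum.inl i) 1 + Finsupp.single (Sum.inr i) 1 with hf
  have hXXe : ∀ d : ℂ, X (Sum.inr i) * X (Sum.inl i) * monomial e d = monomial f d := by
    intro d
    rw [mul_assoc, Xmul, Xmul, hf]
  have hfj : ∀ j : Fin (N + 1), j ≠ i → f (Sum.inl j) = e (Sum.inl j) := by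
    intro j hj
    rw [hf, Finsupp.add_apply, Finsupp.add_apply,
      Finsupp.single_eq_of_ne' (Sum.inl_injective.ne hj.symm),
      Finsupp.single_eq_of_ne' Sum.inr_ne_inl, add_zero, add_zero]
  have hfi : f (Sum.inl i) = e (Sum.inl i) + 1 := by
    rw [hf, Finsupp.add_apply, Finsupp.add_apply, Finsupp.single_eq_same,
      Finsupp.single_eq_of_ne' Sum.inr_ne_inl, add_zero]
  have hQprod : ∀ g : (Fin (N + 1) ⊕ Fin (N + 1)) →₀ ℕ,
      (∏ j : Fin (N + 1), (Nat.factorial (g (Sum.inl j)) : ℂ))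
        = (Nat.factorial (g (Sum.inl i)) : ℂ) *
          ∏ j ∈ Finset.univ.erase i, (Nat.factorial (g (Sum.inl j)) : ℂ) := by
    intro g
    exact (Finset.mul_prod_erase Finset.univ _ (Finset.mem_univ i)).symm
  have herase : (∏ j ∈ Finset.univ.erase i, (Nat.factorial (f (Sum.inl j)) : ℂ))
      = ∏ j ∈ Finset.univ.erase i, (Nat.factorial (e (Sum.inl j)) : ℂ) := by
    apply Finset.prod_congr rfl
    intro j hj
    rw [hfj j (Finset.ne_of_mem_erase hj)]
  rw [pderiv_monomial]
  rcases h : e (Sum.inl i) with _ | k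
  · -- derivative vanishes
    rw [Nat.cast_zero, mul_zero, map_zero, mul_zero, add_zero, hXXe,
      u_monomial N u hu, u_monomial N u hu, hXXe]
    congr 2
    rw [hQprod f, hQprod e, herase, hfi, h]
    norm_num [Nat.factorial]
  · have hg : (e - Finsupp.single (Sum.inl i) 1) + Finsupp.single (Sum.inl i) 1
        + Finsupp.single (Sum.inl i) 1 + Finsupp.single (Sum.inr i) 1 = f := by
      ext x
      rcases eq_or_ne x (Sum.inl i) with rfl | hx
      · simp only [hf, Finsupp.add_apply, Finsupp.tsub_apply, Finsupp.single_apply,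
          if_pos rfl, h]
        try simp
        try omega
      · simp only [hf, Finsupp.add_apply, Finsupp.tsub_apply, Finsupp.single_apply,
          if_neg (Ne.symm hx)]
        try simp
    have hX2 : X (Sum.inr i) * X (Sum.inl i) ^ 2 *
        monomial (e - Finsupp.single (Sum.inl i) 1) (c * ((k + 1 : ℕ) : ℂ))
        = monomial f (c * ((k + 1 : ℕ) : ℂ)) := by
      rw [sq, mul_assoc, mul_assoc, Xmul, Xmul, Xmul, ← hg]
    rw [hXXe, hX2, ← map_add, u_monomial N u hu, u_monomial N u hu, hXXe]
    congr 1
    rw [hQprod f, hQprod e, herase, hfi, h]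
    have hkk : (Nat.factorial (k + 1 + 1) : ℂ) = (k + 2) * Nat.factorial (k + 1) := by
      rw [Nat.factorial_succ]; push_cast; ring
    rw [hkk]
    have h1 := hfac (k + 1)
    have h2 : ((k : ℂ) + 2) ≠ 0 := by
      have := Nat.cast_ne_zero (R := ℂ).mpr (show k + 2 ≠ 0 by omega)
      push_cast at this
      exact this
    have h3 : (∏ j ∈ Finset.univ.erase i, (Nat.factorial (e (Sum.inl j)) : ℂ)) ≠ 0 :=
      Finset.prod_ne_zero_iff.mpr fun j _ => hfac _
    field_simp
    push_cast
    ring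

private lemma key' (N : ℕ) (u : S N →ₗ[ℂ] S N)
    (hu : ∀ e : (Fin (N + 1) ⊕ Fin (N + 1)) →₀ ℕ,
      u (monomial e 1) =
        monomial e ((∏ i : Fin (N + 1), (Nat.factorial (e (Sum.inl i)) : ℂ))⁻¹))
    (i : Fin (N + 1)) (A : S N) :
    u (X (Sum.inr i) * X (Sum.inl i) * A
        + X (Sum.inr i) * X (Sum.inl i) ^ 2 * pderiv (Sum.inl i) A)
      = X (Sum.inr i) * X (Sum.inl i) * u A := by
  induction A using MvPolynomial.induction_on' with
  | monomial e c => exact key N u hu i e c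
  | add p q hp hq =>
    rw [show X (Sum.inr i) * X (Sum.inl i) * (p + q)
        + X (Sum.inr i) * X (Sum.inl i) ^ 2 * pderiv (Sum.inl i) (p + q)
        = (X (Sum.inr i) * X (Sum.inl i) * p
            + X (Sum.inr i) * X (Sum.inl i) ^ 2 * pderiv (Sum.inl i) p)
          + (X (Sum.inr i) * X (Sum.inl i) * q
            + X (Sum.inr i) * X (Sum.inl i) ^ 2 * pderiv (Sum.inl i) q) from by
      rw [map_add]; ring]
    rw [map_add, hp, hq, map_add, mul_add]

/-- For the renormalization map `u(Y^a·X^b) = Y^a·X^b / a!`, one has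
`u(q·A + ∑ᵢ Xᵢ·Yᵢ²·∂A/∂Yᵢ) = q·u(A)` for all `A`. -/
theorem statement14 (N : ℕ) (hN : 2 ≤ N)
    (u : S N →ₗ[ℂ] S N)
    (hu : ∀ e : (Fin (N + 1) ⊕ Fin (N + 1)) →₀ ℕ,
      u (monomial e 1) =
        monomial e ((∏ i : Fin (N + 1), (Nat.factorial (e (Sum.inl i)) : ℂ))⁻¹))
    (A : S N) :
    u (qPoly N * A +
        ∑ i : Fin (N + 1), X (Sum.inr i) * X (Sum.inl i) ^ 2 * pderiv (Sum.inl i) A) =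
      qPoly N * u A := by
  rw [qPoly, Finset.sum_mul, Finset.sum_mul, ← Finset.sum_add_distrib, map_sum]
  exact Finset.sum_congr rfl fun i _ => key' N u hu i A
end
end

section
/- If a₀, a₁ ∈ R satisfy D(a₀) + (1 + F)·a₁ = 0, then there exists b ∈ R with a₁ = D(b). -/
open MvPolynomial

noncomputable section

section Aux

variable {σ : Type*} {w : σ → ℕ}

/-- The partial derivative of a weighted homogeneous polynomial is weighted homogeneous. -/
lemma aux_pderiv_isWeightedHomogeneous {φ : MvPolynomial σ ℂ} {n m : ℕ} (j : σ)
    (hφ : φ.IsWeightedHomogeneous w n) (hm : m + w j = n) :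
    (pderiv j φ).IsWeightedHomogeneous w m := by
  classical
  rw [φ.as_sum, map_sum]
  apply IsWeightedHomogeneous.sum
  intro e he
  rw [pderiv_monomial]
  rcases Nat.eq_zero_or_pos (e j) with h0 | hpos
  · rw [h0]
    simp only [Nat.cast_zero, mul_zero, map_zero]
    exact isWeightedHomogeneous_zero _ _ _
  · apply isWeightedHomogeneous_monomial
    have he' : Finsupp.weight w e = n := hφ (mem_support_iff.mp he)
    have hle : Finsupp.single j 1 ≤ e := by
      rw [Finsupp.single_le_iff]; exact hpos
    have hsub : (e - Finsupp.single j 1) + Finsupp.single j 1 = e :=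
      tsub_add_cancel_of_le hle
    have hws : Finsupp.weight w (Finsupp.single j 1) = w j := by
      simp [Finsupp.weight_apply, Finsupp.sum_single_index]
    have : Finsupp.weight w (e - Finsupp.single j 1) + w j = n := by
      rw [← hws, ← map_add, hsub, he']
    omega

/-- If `A` is weighted homogeneous of degree `n`, every monomial of `A * B` has weight `≥ n`. -/
lemma aux_weight_le_of_coeff_mul_ne_zero {A B : MvPolynomial σ ℂ} {n : ℕ}
    (hA : A.IsWeightedHomogeneous w n) {e : σ →₀ ℕ} (he : coeff e (A * B) ≠ 0) :
    n ≤ Finsupp.weight w e := by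
  classical
  rw [coeff_mul] at he
  obtain ⟨x, hx, hne⟩ := Finset.exists_ne_zero_of_sum_ne_zero he
  have h1 : coeff x.1 A ≠ 0 := left_ne_zero_of_mul hne
  have hw1 := hA h1
  have hx' : x.1 + x.2 = e := Finset.HasAntidiagonal.mem_antidiagonal.mp hx
  rw [← hx', map_add, hw1]
  exact Nat.le_add_right _ _

end Aux

/-- Work in `R = ℂ[x₁,…,x_p, Y₁,…,Y_p]` (left copy: `x`-variables, right
copy: `Y`-variables), with `F` in the `x`-variables only, homogeneous of degree `d ≥ 1`, and
`D(A) = ∑ᵢ (∂F/∂xᵢ)·(∂A/∂Yᵢ)`. If `D(a₀) + (1 + F)·a₁ = 0`, then `a₁ = D(b)` for some `b`. -/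
theorem statement15 (p : ℕ) (hp : 1 ≤ p) (d : ℕ) (hd : 1 ≤ d)
    (F : MvPolynomial (Fin p ⊕ Fin p) ℂ)
    (hFsupp : F ∈ MvPolynomial.supported ℂ
      (Set.range (Sum.inl : Fin p → Fin p ⊕ Fin p)))
    (hFhom : F.IsWeightedHomogeneous (Sum.elim (fun _ => 1) (fun _ => 0) : Fin p ⊕ Fin p → ℕ) d)
    (a₀ a₁ : MvPolynomial (Fin p ⊕ Fin p) ℂ)
    (h : (∑ i : Fin p, pderiv (Sum.inl i) F * pderiv (Sum.inr i) a₀) + (1 + F) * a₁ = 0) :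
    ∃ b : MvPolynomial (Fin p ⊕ Fin p) ℂ,
      a₁ = ∑ i : Fin p, pderiv (Sum.inl i) F * pderiv (Sum.inr i) b := by
  classical
  set w : Fin p ⊕ Fin p → ℕ := (Sum.elim (fun _ => 1) (fun _ => 0)) with hw
  set D : MvPolynomial (Fin p ⊕ Fin p) ℂ →ₗ[ℂ] MvPolynomial (Fin p ⊕ Fin p) ℂ :=
    ∑ i : Fin p,
      (LinearMap.mulLeft ℂ (pderiv (Sum.inl i) F)).comp (pderiv (Sum.inr i)).toLinearMap
    with hD
  have hDapply : ∀ A, D A = ∑ i : Fin p, pderiv (Sum.inl i) F * pderiv (Sum.inr i) A := by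
    intro A
    simp [hD, LinearMap.sum_apply, LinearMap.mulLeft_apply]
  suffices hs : a₁ ∈ LinearMap.range D by
    obtain ⟨b, hb⟩ := hs
    exact ⟨b, by rw [← hb, hDapply]⟩
  -- F has no Y-variables
  have hFr : ∀ i : Fin p, pderiv (Sum.inr i) F = 0 := by
    intro i
    apply pderiv_eq_zero_of_notMem_vars
    intro hmem
    have := (mem_supported.mp hFsupp) (Finset.mem_coe.mpr hmem)
    simp at this
  -- D commutes with multiplication by powers of -F
  have hG : ∀ (k : ℕ) (A), D ((-F) ^ k * A) = (-F) ^ k * D A := by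
    intro k A
    rw [hDapply, hDapply, Finset.mul_sum]
    refine Finset.sum_congr rfl fun i _ => ?_
    have hnegF : pderiv (Sum.inr i) (-F) = 0 := by rw [map_neg, hFr, neg_zero]
    rw [pderiv_mul, pderiv_pow, hnegF]
    ring
  have hDa : D a₀ + (1 + F) * a₁ = 0 := by rw [hDapply]; exact h
  -- the key identity
  have key : ∀ K : ℕ,
      a₁ = D (-(∑ k ∈ Finset.range (K + 1), (-F) ^ k * a₀)) + (-F) ^ (K + 1) * a₁ := by
    intro K
    have e1 : D (-(∑ k ∈ Finset.range (K + 1), (-F) ^ k * a₀)) =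
        ∑ k ∈ Finset.range (K + 1), (-F) ^ k * ((1 + F) * a₁) := by
      rw [map_neg, map_sum, ← Finset.sum_neg_distrib]
      refine Finset.sum_congr rfl fun k _ => ?_
      rw [hG]
      linear_combination (-(-F) ^ k) * hDa
    rw [e1, ← Finset.sum_mul]
    have hgeom := geom_sum_mul (-F) (K + 1)
    linear_combination a₁ * hgeom
  -- homogeneity of -F and its powers
  have hFneg : (-F).IsWeightedHomogeneous w d := by
    intro e he
    apply hFhom
    simpa using he
  have hFpow : ∀ k : ℕ, ((-F) ^ k).IsWeightedHomogeneous w (k * d) := by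
    intro k
    induction k with
    | zero => simpa using isWeightedHomogeneous_one ℂ w
    | succ n ih =>
        rw [pow_succ]
        have := ih.mul hFneg
        simpa [Nat.succ_mul] using this
  -- D maps homogeneous of degree m to homogeneous of degree m + (d-1)
  have hDhom : ∀ (m : ℕ) (A : MvPolynomial (Fin p ⊕ Fin p) ℂ),
      A.IsWeightedHomogeneous w m → (D A).IsWeightedHomogeneous w (m + (d - 1)) := by
    intro m A hA
    rw [hDapply]
    apply IsWeightedHomogeneous.sum
    intro i _
    have h1 : (pderiv (Sum.inl i) F).IsWeightedHomogeneous w (d - 1) :=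
      aux_pderiv_isWeightedHomogeneous _ hFhom (by simp [hw]; omega)
    have h2 : (pderiv (Sum.inr i) A).IsWeightedHomogeneous w m :=
      aux_pderiv_isWeightedHomogeneous _ hA (by simp [hw])
    have := h1.mul h2
    rwa [add_comm] at this
  -- every weighted homogeneous component of a₁ lies in the range of D
  have hcomp : ∀ m : ℕ, weightedHomogeneousComponent w m a₁ ∈ LinearMap.range D := by
    intro m
    set g := -(∑ k ∈ Finset.range (m + 1), (-F) ^ k * a₀) with hg
    have hkey := key m
    have hsplit : weightedHomogeneousComponent w m a₁ =
        weightedHomogeneousComponent w m (D g) +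
          weightedHomogeneousComponent w m ((-F) ^ (m + 1) * a₁) := by
      conv_lhs => rw [hkey]
      rw [map_add]
    have hz : weightedHomogeneousComponent w m ((-F) ^ (m + 1) * a₁) = 0 := by
      apply weightedHomogeneousComponent_eq_zero'
      intro e he
      have hle := aux_weight_le_of_coeff_mul_ne_zero (hFpow (m + 1))
        (mem_support_iff.mp he)
      have : m + 1 ≤ (m + 1) * d := Nat.le_mul_of_pos_right _ (by omega)
      omega
    rw [hsplit, hz, add_zero]
    -- decompose g into homogeneous components
    have hfin := weightedHomogeneousComponent_finsupp (w := w) g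
    have hgsum : g = ∑ j ∈ hfin.toFinset, weightedHomogeneousComponent w j g := by
      conv_lhs => rw [← sum_weightedHomogeneousComponent (w := w) g]
      exact finsum_eq_sum _ hfin
    rw [hgsum, map_sum, map_sum]
    apply Submodule.sum_mem
    intro j _
    by_cases hj : m = j + (d - 1)
    · have hh := hDhom j _ (weightedHomogeneousComponent_isWeightedHomogeneous j g)
      rw [hj, hh.weightedHomogeneousComponent_same]
      exact ⟨weightedHomogeneousComponent w j g, rfl⟩
    · have hh := hDhom j _ (weightedHomogeneousComponent_isWeightedHomogeneous j g)
      rw [hh.weightedHomogeneousComponent_ne m hj]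
      exact Submodule.zero_mem _
  -- conclude
  have hfin := weightedHomogeneousComponent_finsupp (w := w) a₁
  have hsum : a₁ = ∑ m ∈ hfin.toFinset, weightedHomogeneousComponent w m a₁ := by
    conv_lhs => rw [← sum_weightedHomogeneousComponent (w := w) a₁]
    exact finsum_eq_sum _ hfin
  rw [hsum]
  exact Submodule.sum_mem _ fun m _ => hcomp m
end
end

section
/- Let k ≥ 1, m ≥ 1, and let A₁,…,A_k ∈ ℂ[z₁,…,z_k] satisfy, for every 1 ≤ j ≤ k: 2·∂/∂zⱼ( ∑_{i=1}^{k} zᵢ·Aᵢ ) = m·Aⱼ. Then: if m is odd, Aⱼ = 0 for all j; and if m is even, there exists Q ∈ ℂ[z₁,…,z_k] homogeneous of degree m/2 such that Aⱼ = ∂Q/∂zⱼ for all j. -/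
open MvPolynomial

noncomputable section

lemma euler_monomial {k : ℕ} (s : Fin k →₀ ℕ) (a : ℂ) :
    ∑ i : Fin k, X i * pderiv i (monomial s a) =
      monomial s (a * (∑ i : Fin k, (s i : ℂ))) := by
  rw [Finset.mul_sum, map_sum]
  refine Finset.sum_congr rfl fun i _ => ?_
  rw [pderiv_monomial]
  rcases Nat.eq_zero_or_pos (s i) with h | h
  · simp [h]
  · have hs : Finsupp.single i 1 + (s - Finsupp.single i 1) = s := by
      ext j
      rcases eq_or_ne j i with rfl | hj
      · simp only [Finsupp.add_apply, Finsupp.tsub_apply, Finsupp.single_apply, if_pos rfl, if_true]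
        omega
      · simp [Finsupp.single_apply, Ne.symm hj]
    rw [show (X i : MvPolynomial (Fin k) ℂ) = monomial (Finsupp.single i 1) 1 from rfl,
      monomial_mul, one_mul, hs]

lemma euler_coeff {k : ℕ} (P : MvPolynomial (Fin k) ℂ) (σ : Fin k →₀ ℕ) :
    coeff σ (∑ i : Fin k, X i * pderiv i P) = (∑ i : Fin k, (σ i : ℂ)) * coeff σ P := by
  induction P using MvPolynomial.induction_on' with
  | monomial s a =>
    rw [euler_monomial, coeff_monomial, coeff_monomial]
    split_ifs with h
    · subst h; ring
    · ring
  | add p q hp hq =>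
    simp only [map_add, mul_add, Finset.sum_add_distrib, coeff_add, hp, hq]

/-- In `ℂ[z₁,…,z_k]`, if `A₁,…,A_k` satisfy
`2·∂/∂zⱼ(∑ᵢ zᵢ·Aᵢ) = m·Aⱼ` for all `j`, then for `m` odd all `Aⱼ` vanish, and for `m` even
there is `Q` homogeneous of degree `m/2` with `Aⱼ = ∂Q/∂zⱼ` for all `j`. -/
theorem statement16 (k : ℕ) (hk : 1 ≤ k) (m : ℕ) (hm : 1 ≤ m)
    (A : Fin k → MvPolynomial (Fin k) ℂ)
    (hA : ∀ j : Fin k,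
      2 * pderiv j (∑ i : Fin k, X i * A i) = (m : MvPolynomial (Fin k) ℂ) * A j) :
    (Odd m → ∀ j, A j = 0) ∧
      (Even m → ∃ Q : MvPolynomial (Fin k) ℂ,
        Q.IsHomogeneous (m / 2) ∧ ∀ j, A j = pderiv j Q) := by
  set P : MvPolynomial (Fin k) ℂ := ∑ i : Fin k, X i * A i with hP
  have hmc : (m : ℂ) ≠ 0 := Nat.cast_ne_zero.mpr (by omega)
  have hcast : (m : MvPolynomial (Fin k) ℂ) = C (m : ℂ) := by push_cast; rfl
  -- hA rephrased
  have h2 : (C (2 : ℂ) : MvPolynomial (Fin k) ℂ) = 2 := map_ofNat C 2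
  have hA' : ∀ j, C (m : ℂ) * A j = C (2 : ℂ) * pderiv j P := by
    intro j
    rw [h2, hA j, hcast]
  -- key: m * P = 2 * ∑ j, X j * pderiv j P
  have key : C (m : ℂ) * P = C (2 : ℂ) * ∑ j : Fin k, X j * pderiv j P := by
    calc C (m : ℂ) * P = ∑ i : Fin k, X i * (C (m : ℂ) * A i) := by
          rw [hP, Finset.mul_sum]; exact Finset.sum_congr rfl fun i _ => by ring
      _ = ∑ i : Fin k, X i * (C (2 : ℂ) * pderiv i P) :=
          Finset.sum_congr rfl fun i _ => by rw [hA' i]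
      _ = C (2 : ℂ) * ∑ j : Fin k, X j * pderiv j P := by
          rw [Finset.mul_sum]; exact Finset.sum_congr rfl fun i _ => by ring
  -- coefficient-wise consequence
  have hcoeff : ∀ σ : Fin k →₀ ℕ, coeff σ P ≠ 0 → (m : ℂ) = 2 * ∑ i : Fin k, (σ i : ℂ) := by
    intro σ hσ
    have h := congrArg (coeff σ) key
    rw [coeff_C_mul, coeff_C_mul, euler_coeff] at h
    have := mul_right_cancel₀ hσ (by linear_combination h :
      (m : ℂ) * coeff σ P = (2 * ∑ i : Fin k, (σ i : ℂ)) * coeff σ P)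
    exact this
  have hdσ : ∀ σ : Fin k →₀ ℕ, ((σ.degree : ℂ)) = ∑ i : Fin k, (σ i : ℂ) := by
    intro σ
    rw [Finsupp.degree_apply]
    push_cast
    exact Finset.sum_subset (Finset.subset_univ _)
      (fun x _ hx => by simpa using (Finsupp.notMem_support_iff.mp hx))
  have hdeg : ∀ σ : Fin k →₀ ℕ, coeff σ P ≠ 0 → m = 2 * σ.degree := by
    intro σ hσ
    have h := hcoeff σ hσ
    have : (m : ℂ) = ((2 * σ.degree : ℕ) : ℂ) := by push_cast; rw [hdσ σ]; exact h
    exact_mod_cast this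
  constructor
  · -- odd case
    intro hodd j
    have hPzero : P = 0 := by
      ext σ
      by_contra hσ
      rw [coeff_zero] at hσ
      have := hdeg σ hσ
      exact (Nat.not_even_iff_odd.mpr hodd) ⟨σ.degree, by omega⟩
    have h := hA' j
    rw [hPzero, map_zero, mul_zero] at h
    rcases mul_eq_zero.mp h with h' | h'
    · exact absurd h' (by simpa using hmc)
    · exact h'
  · -- even case
    intro heven
    refine ⟨C ((2 : ℂ) / m) * P, ?_, ?_⟩
    · intro σ hσ
      rw [coeff_C_mul] at hσ
      have hσ' : coeff σ P ≠ 0 := right_ne_zero_of_mul hσ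
      have h := hdeg σ hσ'
      rw [show (Finsupp.weight (1 : Fin k → ℕ)) = Finsupp.weight (fun _ => 1) from rfl,
        ← Finsupp.degree_eq_weight_one]
      omega
    · intro j
      rw [pderiv_C_mul]
      have h := hA' j
      have : C ((2 : ℂ) / m) * pderiv j P = C ((m : ℂ))⁻¹ * (C (2 : ℂ) * pderiv j P) := by
        rw [← mul_assoc, ← map_mul]
        ring_nf
      rw [this, ← h, ← mul_assoc, ← map_mul, inv_mul_cancel₀ hmc, map_one, one_mul]
end
end
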